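/- arXiv:2501.07915 — 6 statements merged into one kernel-verified Lean document; each statement's English description precedes it below -/
import Mathlib

section
/- Let d, N ≥ 1, let P be a positive semidefinite Nd×Nd real matrix written in d×d blocks (P_{i,j})_{1≤i,j≤N}, and let ω ∈ ℝ^N satisfy ω_i > 0 for all i and Σ_{i=1}^N ω_i = 1. Then P ⪯ blockdiag(ω₁⁻¹ P_{1,1}, …, ω_N⁻¹ P_{N,N}) in the Loewner order. -/
open Matrix

section
variable {n : Type*} [Fintype n] {P : Matrix n n ℝ}

lemma Qsymm (hP : P.IsHermitian) (v w : n → ℝ) :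
    w ⬝ᵥ P *ᵥ v = v ⬝ᵥ P *ᵥ w := by
  have hPt : Pᵀ = P := by
    rw [← P.conjTranspose_eq_transpose_of_trivial, hP.eq]
  rw [dotProduct_mulVec, ← mulVec_transpose, hPt, dotProduct_comm]

lemma pairwise_bound (hP : P.PosSemidef) (v w : n → ℝ) {a b : ℝ} (ha : 0 < a) (hb : 0 < b) :
    v ⬝ᵥ P *ᵥ w ≤ b / (2*a) * (v ⬝ᵥ P *ᵥ v) + a / (2*b) * (w ⬝ᵥ P *ᵥ w) := by
  have h := hP.dotProduct_mulVec_nonneg (b • v - a • w)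
  rw [star_trivial] at h
  have hexp : (b • v - a • w) ⬝ᵥ P *ᵥ (b • v - a • w)
      = b*b*(v ⬝ᵥ P *ᵥ v) - 2*a*b*(v ⬝ᵥ P *ᵥ w) + a*a*(w ⬝ᵥ P *ᵥ w) := by
    simp only [mulVec_sub, mulVec_smul, sub_dotProduct, dotProduct_sub, smul_dotProduct,
      dotProduct_smul, smul_eq_mul, Qsymm hP.1 v w]
    ring
  rw [hexp] at h
  have h2 : 2*a*b*(v ⬝ᵥ P *ᵥ w) ≤ b*b*(v ⬝ᵥ P *ᵥ v) + a*a*(w ⬝ᵥ P *ᵥ w) := by linarith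
  rw [div_mul_eq_mul_div, div_mul_eq_mul_div, div_add_div _ _ (by positivity) (by positivity),
    le_div_iff₀ (by positivity)]
  nlinarith [h2, ha.le, hb.le]

lemma sum_dotProduct' {ι : Type*} [Fintype ι] (f : ι → n → ℝ) (w : n → ℝ) :
    (∑ i, f i) ⬝ᵥ w = ∑ i, f i ⬝ᵥ w := by
  simp only [dotProduct, Finset.sum_apply, Finset.sum_mul]
  exact Finset.sum_comm

lemma mulVec_sum' {ι : Type*} [Fintype ι] (f : ι → n → ℝ) :
    P *ᵥ (∑ i, f i) = ∑ i, P *ᵥ f i := by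
  funext p
  simp only [mulVec, dotProduct, Finset.sum_apply, Finset.mul_sum]
  exact Finset.sum_comm

lemma key (hP : P.PosSemidef) {ι : Type*} [Fintype ι] (u : ι → n → ℝ)
    (ω : ι → ℝ) (hω : ∀ i, 0 < ω i) (hsum : ∑ i, ω i = 1) :
    (∑ i, u i) ⬝ᵥ P *ᵥ (∑ i, u i) ≤ ∑ i, (ω i)⁻¹ * (u i ⬝ᵥ P *ᵥ u i) := by
  have hA : ∀ Q : ι → ℝ, ∑ i, ∑ j, ω j / (2*ω i) * Q i = ∑ i, (2*ω i)⁻¹ * Q i := by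
    intro Q
    refine Finset.sum_congr rfl fun i _ => ?_
    have : ∀ j : ι, ω j / (2*ω i) * Q i = ω j * ((2*ω i)⁻¹ * Q i) := fun j => by ring
    simp only [this, ← Finset.sum_mul, hsum, one_mul]
  have expand : (∑ i, u i) ⬝ᵥ P *ᵥ (∑ i, u i) = ∑ i, ∑ j, u i ⬝ᵥ P *ᵥ u j := by
    rw [mulVec_sum', sum_dotProduct']
    exact Finset.sum_congr rfl fun i _ => by
      simp only [dotProduct, Finset.sum_apply, Finset.mul_sum]
      exact Finset.sum_comm
  rw [expand]
  calc ∑ i, ∑ j, u i ⬝ᵥ P *ᵥ u j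
      ≤ ∑ i, ∑ j, (ω j / (2*ω i) * (u i ⬝ᵥ P *ᵥ u i) + ω i / (2*ω j) * (u j ⬝ᵥ P *ᵥ u j)) :=
        Finset.sum_le_sum fun i _ => Finset.sum_le_sum fun j _ =>
          pairwise_bound hP (u i) (u j) (hω i) (hω j)
    _ = ∑ i, (ω i)⁻¹ * (u i ⬝ᵥ P *ᵥ u i) := by
        simp only [Finset.sum_add_distrib]
        rw [hA, Finset.sum_comm, hA]
        rw [← Finset.sum_add_distrib]
        refine Finset.sum_congr rfl fun i _ => ?_
        have := (hω i).ne'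
        field_simp
        ring
end


noncomputable section

/-- the CI centralized bound `blockdiag(ω₁⁻¹ P₁₁, …, ω_N⁻¹ P_NN)`
dominates any positive semidefinite block matrix `P` with those diagonal blocks,
whenever the ωᵢ are positive and sum to 1. -/
theorem ci_centralized_bound (d N : ℕ) (hd : 1 ≤ d) (hN : 1 ≤ N)
    (P : Matrix (Fin N × Fin d) (Fin N × Fin d) ℝ) (hP : P.PosSemidef)
    (ω : Fin N → ℝ) (hω : ∀ i, 0 < ω i) (hsum : ∑ i, ω i = 1) :
    (Matrix.of (fun p q : Fin N × Fin d =>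
        if p.1 = q.1 then (ω p.1)⁻¹ * P p q else 0) - P).PosSemidef := by
  set D : Matrix (Fin N × Fin d) (Fin N × Fin d) ℝ :=
    Matrix.of (fun p q : Fin N × Fin d =>
        if p.1 = q.1 then (ω p.1)⁻¹ * P p q else 0) with hD
  have hPsym : ∀ p q, P q p = P p q := fun p q => by
    have := congrFun (congrFun hP.1 p) q
    simpa [conjTranspose_apply] using this
  have hDherm : D.IsHermitian := by
    ext p q
    simp only [hD, conjTranspose_apply, of_apply, star_trivial]
    by_cases h : q.1 = p.1
    · rw [if_pos h, if_pos h.symm, hPsym p q, h]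
    · rw [if_neg h, if_neg (fun e => h (Eq.symm e))]
  refine .of_dotProduct_mulVec_nonneg (hDherm.sub hP.1) fun x => ?_
  rw [star_trivial, sub_mulVec, dotProduct_sub, sub_nonneg]
  set u : Fin N → (Fin N × Fin d) → ℝ := fun i p => if p.1 = i then x p else 0 with hu
  have hx : x = ∑ i, u i := by
    funext p
    simp [hu, Finset.sum_apply, Finset.sum_ite_eq]
  have hDform : x ⬝ᵥ D *ᵥ x = ∑ i, (ω i)⁻¹ * (u i ⬝ᵥ P *ᵥ u i) := by
    simp only [hD, hu, dotProduct, mulVec, of_apply, Finset.mul_sum,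
      Fintype.sum_prod_type, ite_mul, mul_ite, zero_mul, mul_zero,
      Finset.sum_ite_irrel, Finset.sum_const_zero, Finset.sum_ite_eq,
      Finset.sum_ite_eq', Finset.mem_univ, if_true]
    exact Finset.sum_congr rfl fun i _ => Finset.sum_congr rfl fun a _ =>
      Finset.sum_congr rfl fun b _ => by ring
  calc x ⬝ᵥ P *ᵥ x = (∑ i, u i) ⬝ᵥ P *ᵥ (∑ i, u i) := by rw [← hx]
    _ ≤ ∑ i, (ω i)⁻¹ * (u i ⬝ᵥ P *ᵥ u i) := key hP u ω hω hsum
    _ = x ⬝ᵥ D *ᵥ x := hDform.symm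
end
end

section
/- For every ω ∈ (0,1): (i) every P ∈ 𝒜 satisfies P ⪯ Bc(ω); and (ii) the pair (K(ω), B_F(ω)) is a conservative fusion over 𝒜, i.e. K(ω) H = I_d and K(ω) P K(ω)ᵀ ⪯ B_F(ω) for every P ∈ 𝒜. -/
open Matrix Set

noncomputable section

/-- `H = [I_d; I_d]`, the two vertically stacked `d×d` identity blocks. -/
def Hmat (d : ℕ) : Matrix (Fin d ⊕ Fin d) (Fin d) ℝ :=
  Matrix.fromRows 1 1

/-- The admissible set `𝒜`: all matrices `P⁽¹⁾ + S` with `P⁽¹⁾` positive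
semidefinite with diagonal blocks `P₁` and `P₂`. -/
def Adm (d : ℕ) (P₁ P₂ : Matrix (Fin d) (Fin d) ℝ)
    (S : Matrix (Fin d ⊕ Fin d) (Fin d ⊕ Fin d) ℝ) :
    Set (Matrix (Fin d ⊕ Fin d) (Fin d ⊕ Fin d) ℝ) :=
  {P | ∃ Q : Matrix (Fin d ⊕ Fin d) (Fin d ⊕ Fin d) ℝ,
      Q.PosSemidef ∧ Q.toBlocks₁₁ = P₁ ∧ Q.toBlocks₂₂ = P₂ ∧ P = Q + S}

/-- The ESCI centralized bound `Bc(ω) = blockdiag(ω⁻¹ P₁, (1-ω)⁻¹ P₂) + S`. -/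
def Bc (d : ℕ) (P₁ P₂ : Matrix (Fin d) (Fin d) ℝ)
    (S : Matrix (Fin d ⊕ Fin d) (Fin d ⊕ Fin d) ℝ) (ω : ℝ) :
    Matrix (Fin d ⊕ Fin d) (Fin d ⊕ Fin d) ℝ :=
  Matrix.fromBlocks (ω⁻¹ • P₁) 0 0 ((1 - ω)⁻¹ • P₂) + S

lemma ct_eq_aux {n m : Type*} (A : Matrix n m ℝ) : Aᴴ = Aᵀ := by
  ext i j; simp [conjTranspose_apply]

section Aux

variable {n m : Type*} [Fintype n] [Fintype m]

lemma psd_smul_aux {A : Matrix n n ℝ} (hA : A.PosSemidef) {c : ℝ} (hc : 0 ≤ c) :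
    (c • A).PosSemidef := by
  refine posSemidef_iff_dotProduct_mulVec.mpr ⟨?_, fun x => ?_⟩
  · have h : Aᵀ = A := by rw [← ct_eq_aux, hA.1.eq]
    unfold Matrix.IsHermitian
    rw [ct_eq_aux, transpose_smul, h]
  · rw [smul_mulVec, dotProduct_smul]
    exact smul_nonneg hc (hA.dotProduct_mulVec_nonneg x)

lemma pd_smul_aux {A : Matrix n n ℝ} (hA : A.PosDef) {c : ℝ} (hc : 0 < c) :
    (c • A).PosDef := by
  refine posDef_iff_dotProduct_mulVec.mpr ⟨(psd_smul_aux hA.posSemidef hc.le).1, fun x hx => ?_⟩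
  rw [smul_mulVec, dotProduct_smul]
  exact smul_pos hc (hA.dotProduct_mulVec_pos hx)

lemma pd_ctmm_aux {A : Matrix n n ℝ} (hA : A.PosDef)
    (B : Matrix n m ℝ) (hB : ∀ x, x ≠ 0 → B *ᵥ x ≠ 0) : (Bᴴ * A * B).PosDef := by
  rw [posDef_iff_dotProduct_mulVec]
  constructor
  · exact isHermitian_conjTranspose_mul_mul B hA.1
  · intro x hx
    simpa only [star_mulVec, dotProduct_mulVec, vecMul_vecMul] using hA.dotProduct_mulVec_pos (hB x hx)

lemma Hmat_mulVec_ne (d : ℕ) {x : Fin d → ℝ} (hx : x ≠ 0) : Hmat d *ᵥ x ≠ 0 := by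
  rw [Hmat, fromRows_mulVec, one_mulVec]
  intro h
  apply hx
  funext i
  simpa using congrFun h (Sum.inl i)

end Aux

/-- for every `ω ∈ (0,1)`, the centralized ESCI bound dominates every
admissible covariance, and the pair `(K(ω), B_F(ω))` is a conservative fusion over `𝒜`. -/
theorem esci_is_conservative (d : ℕ) (hd : 1 ≤ d)
    (P₁ P₂ : Matrix (Fin d) (Fin d) ℝ) (hP₁ : P₁.PosDef) (hP₂ : P₂.PosDef)
    (S : Matrix (Fin d ⊕ Fin d) (Fin d ⊕ Fin d) ℝ) (hS : S.PosDef) :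
    ∀ ω ∈ Set.Ioo (0 : ℝ) 1,
      (∀ P ∈ Adm d P₁ P₂ S, (Bc d P₁ P₂ S ω - P).PosSemidef) ∧
      (((Hmat d)ᵀ * (Bc d P₁ P₂ S ω)⁻¹ * Hmat d)⁻¹ * (Hmat d)ᵀ * (Bc d P₁ P₂ S ω)⁻¹)
          * Hmat d = 1 ∧
      ∀ P ∈ Adm d P₁ P₂ S,
        (((Hmat d)ᵀ * (Bc d P₁ P₂ S ω)⁻¹ * Hmat d)⁻¹ -
          (((Hmat d)ᵀ * (Bc d P₁ P₂ S ω)⁻¹ * Hmat d)⁻¹ * (Hmat d)ᵀ * (Bc d P₁ P₂ S ω)⁻¹)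
            * P *
          (((Hmat d)ᵀ * (Bc d P₁ P₂ S ω)⁻¹ * Hmat d)⁻¹ * (Hmat d)ᵀ * (Bc d P₁ P₂ S ω)⁻¹)ᵀ).PosSemidef := by
  intro ω hω
  obtain ⟨hω0, hω1⟩ := hω
  have h1ω : (0:ℝ) < 1 - ω := by linarith
  -- Part 1
  have hpart1 : ∀ P ∈ Adm d P₁ P₂ S, (Bc d P₁ P₂ S ω - P).PosSemidef := by
    rintro P ⟨Q, hQ, hQ1, hQ2, rfl⟩
    have hsub : Bc d P₁ P₂ S ω - (Q + S)
        = Matrix.fromBlocks (ω⁻¹ • P₁) 0 0 ((1 - ω)⁻¹ • P₂) - Q := by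
      rw [Bc]; abel
    rw [hsub]
    set a := Real.sqrt ((1-ω)/ω) with ha
    set b := Real.sqrt (ω/(1-ω)) with hb
    have ha2 : a * a = (1-ω)/ω := Real.mul_self_sqrt (by positivity)
    have hb2 : b * b = ω/(1-ω) := Real.mul_self_sqrt (by positivity)
    have hab : a * b = 1 := by
      rw [ha, hb, ← Real.sqrt_mul (by positivity)]
      rw [show (1-ω)/ω * (ω/(1-ω)) = 1 by field_simp]
      exact Real.sqrt_one
    set J : Matrix (Fin d ⊕ Fin d) (Fin d ⊕ Fin d) ℝ :=
      fromBlocks (a • (1 : Matrix (Fin d) (Fin d) ℝ)) 0 0 (-(b • 1)) with hJ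
    have key : Matrix.fromBlocks (ω⁻¹ • P₁) 0 0 ((1 - ω)⁻¹ • P₂) - Q = Jᴴ * Q * J := by
      rw [ct_eq_aux]
      have hQeq : Q = fromBlocks P₁ Q.toBlocks₁₂ Q.toBlocks₂₁ P₂ := by
        rw [← hQ1, ← hQ2]; exact (fromBlocks_toBlocks Q).symm
      rw [hQeq]
      simp only [hJ, fromBlocks_transpose, transpose_smul, transpose_one, transpose_zero,
        transpose_neg, fromBlocks_multiply, Matrix.smul_mul, Matrix.mul_smul, Matrix.one_mul,
        Matrix.mul_one, Matrix.zero_mul, Matrix.mul_zero, Matrix.neg_mul, Matrix.mul_neg,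
        add_zero, zero_add, smul_smul, neg_neg, smul_neg, neg_zero, sub_eq_add_neg,
        fromBlocks_neg, fromBlocks_add]
      have h1 : (a*a) • P₁ = ω⁻¹ • P₁ + -P₁ := by
        rw [ha2, show (1-ω)/ω = ω⁻¹ + -1 by field_simp; ring, add_smul, neg_smul, one_smul]
      have h2 : (b*b) • P₂ = (1 + -ω)⁻¹ • P₂ + -P₂ := by
        rw [hb2, show ω/(1-ω) = (1+-ω)⁻¹ + -1 by
            rw [show (1:ℝ) + -ω = 1 - ω by ring]; field_simp; ring,
          add_smul, neg_smul, one_smul]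
      rw [mul_comm b a, hab, one_smul, one_smul, h2, h1]
    rw [key]
    exact hQ.conjTranspose_mul_mul_same J
  refine ⟨hpart1, ?_, ?_⟩
  -- Bc is positive definite
  all_goals {
    have hD : (Matrix.fromBlocks (ω⁻¹ • P₁) 0 0 ((1 - ω)⁻¹ • P₂) :
        Matrix (Fin d ⊕ Fin d) (Fin d ⊕ Fin d) ℝ).PosSemidef := by
      have hD2 : ((1 - ω)⁻¹ • P₂).PosDef := pd_smul_aux hP₂ (by positivity)
      haveI := hD2.isUnit.invertible
      have := (Matrix.PosDef.fromBlocks₂₂ (ω⁻¹ • P₁) 0 hD2).mpr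
        (by simpa using psd_smul_aux hP₁.posSemidef (by positivity : (0:ℝ) ≤ ω⁻¹))
      simpa using this
    have hA : (Bc d P₁ P₂ S ω).PosDef := Matrix.PosDef.posSemidef_add hD hS
    have hAi : (Bc d P₁ P₂ S ω)⁻¹.PosDef := hA.inv
    have hF : ((Hmat d)ᵀ * (Bc d P₁ P₂ S ω)⁻¹ * Hmat d).PosDef := by
      rw [← ct_eq_aux]
      exact pd_ctmm_aux hAi (Hmat d) (fun x hx => Hmat_mulVec_ne d hx)
    haveI := hA.isUnit.invertible
    haveI := hF.isUnit.invertible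
    first
    | -- Part 2 : K H = 1
      (rw [Matrix.mul_assoc, Matrix.mul_assoc, ← Matrix.mul_assoc (Hmat d)ᵀ]
       exact Matrix.inv_mul_of_invertible _)
    | -- Part 3
      (rintro P hP
       have hPsd := hpart1 P hP
       set A := Bc d P₁ P₂ S ω
       set F := (Hmat d)ᵀ * A⁻¹ * Hmat d with hFdef
       set K := F⁻¹ * (Hmat d)ᵀ * A⁻¹ with hK
       have hAsymm : Aᵀ = A := by rw [← ct_eq_aux, hA.isHermitian.eq]
       have hFsymm : Fᵀ = F := by rw [← ct_eq_aux, hF.isHermitian.eq]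
       have hKt : Kᵀ = A⁻¹ * (Hmat d * F⁻¹) := by
         rw [hK, Matrix.transpose_mul, Matrix.transpose_mul, Matrix.transpose_nonsing_inv,
           Matrix.transpose_nonsing_inv, hAsymm, hFsymm, Matrix.transpose_transpose]

       have hKA : K * A * Kᵀ = F⁻¹ := by
         rw [hKt, hK]
         calc F⁻¹ * (Hmat d)ᵀ * A⁻¹ * A * (A⁻¹ * (Hmat d * F⁻¹))
             = F⁻¹ * ((Hmat d)ᵀ * (A⁻¹ * (A * (A⁻¹ * (Hmat d * F⁻¹))))) := by
               simp only [Matrix.mul_assoc]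
           _ = F⁻¹ * ((Hmat d)ᵀ * (A⁻¹ * (Hmat d * F⁻¹))) := by
               rw [Matrix.mul_inv_cancel_left_of_invertible]
           _ = F⁻¹ * F * F⁻¹ := by rw [hFdef]; simp only [Matrix.mul_assoc]
           _ = F⁻¹ := by rw [Matrix.inv_mul_of_invertible, Matrix.one_mul]
       have hgoal : F⁻¹ - K * P * Kᵀ = K * (A - P) * Kᴴ := by
         rw [ct_eq_aux, Matrix.mul_sub, Matrix.sub_mul, hKA]
       rw [hgoal]
       exact hPsd.mul_mul_conjTranspose_same K)
  }
end
end

section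
/- Let d, N ≥ 1, let H ∈ ℝ^{Nd×d} be the matrix of N stacked d×d identity blocks, let P be a symmetric positive definite Nd×Nd real matrix, let K ∈ ℝ^{d×Nd} satisfy K H = I_d, and let B be a symmetric d×d matrix with K P Kᵀ ⪯ B. Then (Hᵀ P⁻¹ H)⁻¹ ⪯ B. -/
open Matrix

noncomputable section

/-- any conservative bound for a fusion gain dominates the optimal
fused covariance `(Hᵀ P⁻¹ H)⁻¹`. -/
theorem conservative_bound_dominates_optimal (d N : ℕ) (hd : 1 ≤ d) (hN : 1 ≤ N)
    (H : Matrix (Fin N × Fin d) (Fin d) ℝ)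
    (hH : ∀ p k, H p k = if p.2 = k then (1 : ℝ) else 0)
    (P : Matrix (Fin N × Fin d) (Fin N × Fin d) ℝ) (hP : P.PosDef)
    (K : Matrix (Fin d) (Fin N × Fin d) ℝ) (hK : K * H = 1)
    (B : Matrix (Fin d) (Fin d) ℝ) (hB : B.IsSymm)
    (hKB : (B - K * P * Kᵀ).PosSemidef) :
    (B - (Hᵀ * P⁻¹ * H)⁻¹).PosSemidef := by
  have hNe : Nonempty (Fin N) := ⟨⟨0, hN⟩⟩
  have hPinv : P⁻¹.PosDef := hP.inv
  have hPsymm : Pᵀ = P := by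
    have := hP.isHermitian
    rwa [IsHermitian, conjTranspose_eq_transpose_of_trivial] at this
  have hPinvSymm : (P⁻¹)ᵀ = P⁻¹ := by
    rw [transpose_nonsing_inv, hPsymm]
  set M := Hᵀ * P⁻¹ * H with hMdef
  have hMsymm : Mᵀ = M := by
    rw [hMdef, transpose_mul, transpose_mul, transpose_transpose, hPinvSymm, Matrix.mul_assoc]
  have hHmv : ∀ (x : Fin d → ℝ), H *ᵥ x = fun p => x p.2 := by
    intro x; ext p
    simp only [mulVec, dotProduct, hH]
    simp
  have hMpos : M.PosDef := by
    rw [posDef_iff_dotProduct_mulVec]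
    constructor
    · rw [IsHermitian, conjTranspose_eq_transpose_of_trivial, hMsymm]
    · intro x hx
      have h1 : star x ⬝ᵥ M *ᵥ x = star (H *ᵥ x) ⬝ᵥ P⁻¹ *ᵥ (H *ᵥ x) := by
        rw [hMdef, ← mulVec_mulVec, ← mulVec_mulVec, dotProduct_mulVec, vecMul_transpose]
        simp [star_trivial]
      rw [h1]
      apply hPinv.dotProduct_mulVec_pos
      intro h
      apply hx
      obtain ⟨i⟩ := hNe
      funext k
      have := congrFun h (i, k)
      rw [hHmv] at this
      simpa using this
  have hMunit : IsUnit M.det := (isUnit_iff_isUnit_det M).mp hMpos.isUnit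
  have hMinvM : M⁻¹ * M = 1 := nonsing_inv_mul M hMunit
  set S := M⁻¹ with hSdef
  have hSsymm : Sᵀ = S := by
    rw [hSdef, transpose_nonsing_inv, hMsymm]
  set L := K - S * Hᵀ * P⁻¹ with hLdef
  have hPunit : IsUnit P.det := (isUnit_iff_isUnit_det P).mp hP.isUnit
  have hPinvP : P⁻¹ * P = 1 := nonsing_inv_mul P hPunit
  have hPPinv : P * P⁻¹ = 1 := mul_nonsing_inv P hPunit
  have hHtKt : Hᵀ * Kᵀ = 1 := by rw [← transpose_mul, hK, transpose_one]
  have hLP : L * P = K * P - S * Hᵀ := by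
    rw [hLdef, Matrix.sub_mul, Matrix.mul_assoc (S * Hᵀ) P⁻¹ P, hPinvP, Matrix.mul_one]
  have hLt : Lᵀ = Kᵀ - P⁻¹ * H * S := by
    rw [hLdef, transpose_sub, transpose_mul, transpose_mul, transpose_transpose,
      hPinvSymm, hSsymm, Matrix.mul_assoc]
  have key : L * P * Lᵀ = K * P * Kᵀ - S := by
    rw [hLP, hLt, Matrix.sub_mul, Matrix.mul_sub, Matrix.mul_sub]
    have e1 : K * P * (P⁻¹ * H * S) = S := by
      rw [show P⁻¹ * H * S = P⁻¹ * (H * S) from Matrix.mul_assoc _ _ _,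
        Matrix.mul_assoc K P _, ← Matrix.mul_assoc P P⁻¹ _, hPPinv, Matrix.one_mul,
        ← Matrix.mul_assoc, hK, Matrix.one_mul]
    have e2 : S * Hᵀ * Kᵀ = S := by rw [Matrix.mul_assoc, hHtKt, Matrix.mul_one]
    have e3 : S * Hᵀ * (P⁻¹ * H * S) = S := by
      rw [Matrix.mul_assoc S Hᵀ _, ← Matrix.mul_assoc Hᵀ (P⁻¹ * H) S,
        ← Matrix.mul_assoc Hᵀ P⁻¹ H, ← hMdef, ← Matrix.mul_assoc S M S,
        hMinvM, Matrix.one_mul]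
    rw [e1, e2, e3]
    abel
  have hLPL : (L * P * Lᵀ).PosSemidef := by
    have := hP.posSemidef.mul_mul_conjTranspose_same L
    rwa [conjTranspose_eq_transpose_of_trivial] at this
  have hfin : B - S = (B - K * P * Kᵀ) + (L * P * Lᵀ) := by rw [key]; abel
  rw [hfin]
  exact hKB.add hLPL
end
end

section
/- For every x ∈ ℝᵈ with x ≠ 0, the function h_x : [0,1] → ℝ, h_x(ω) = xᵀ A_F(ω) x, is strictly concave on [0,1]. -/
open Matrix Set

noncomputable section

/-- The fused ESCI precision matrix `A_F(ω) = Hᵀ Bc(ω)⁻¹ H`, continuously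
extended at the endpoints. -/
def AF (d : ℕ) (P₁ P₂ : Matrix (Fin d) (Fin d) ℝ)
    (S : Matrix (Fin d ⊕ Fin d) (Fin d ⊕ Fin d) ℝ) (ω : ℝ) :
    Matrix (Fin d) (Fin d) ℝ :=
  if ω = 0 then (P₂ + S.toBlocks₂₂)⁻¹
  else if ω = 1 then (P₁ + S.toBlocks₁₁)⁻¹
  else (Hmat d)ᵀ * (Bc d P₁ P₂ S ω)⁻¹ * Hmat d

namespace ESCIAux

variable {d : ℕ}

/-- real star is trivial on vectors -/
lemma rstar {n : Type*} (y : n → ℝ) : star y = y := by simp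

/-- `E(ω) = blockdiag(ω P₁⁻¹, (1-ω) P₂⁻¹)`, the inverse of the block diagonal part. -/
def Emat (P₁ P₂ : Matrix (Fin d) (Fin d) ℝ) (ω : ℝ) :
    Matrix (Fin d ⊕ Fin d) (Fin d ⊕ Fin d) ℝ :=
  Matrix.fromBlocks (ω • P₁⁻¹) 0 0 ((1 - ω) • P₂⁻¹)

def Mmat (P₁ P₂ : Matrix (Fin d) (Fin d) ℝ)
    (S : Matrix (Fin d ⊕ Fin d) (Fin d ⊕ Fin d) ℝ) (ω : ℝ) :
    Matrix (Fin d ⊕ Fin d) (Fin d ⊕ Fin d) ℝ :=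
  S⁻¹ + Emat P₁ P₂ ω

def Gmat (P₁ P₂ : Matrix (Fin d) (Fin d) ℝ)
    (S : Matrix (Fin d ⊕ Fin d) (Fin d ⊕ Fin d) ℝ) (ω : ℝ) :
    Matrix (Fin d ⊕ Fin d) (Fin d ⊕ Fin d) ℝ :=
  Emat P₁ P₂ ω - Emat P₁ P₂ ω * (Mmat P₁ P₂ S ω)⁻¹ * Emat P₁ P₂ ω

section Facts

variable {P₁ P₂ : Matrix (Fin d) (Fin d) ℝ} {S : Matrix (Fin d ⊕ Fin d) (Fin d ⊕ Fin d) ℝ}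

lemma posSemidef_smul {A : Matrix (Fin d) (Fin d) ℝ} (hA : A.PosSemidef) {c : ℝ} (hc : 0 ≤ c) :
    (c • A).PosSemidef := by
  refine posSemidef_iff_dotProduct_mulVec.mpr ⟨?_, ?_⟩
  · have h := hA.isHermitian
    unfold Matrix.IsHermitian at *
    rw [conjTranspose_smul, h]
    simp
  · intro y
    rw [smul_mulVec, dotProduct_smul, smul_eq_mul]
    exact mul_nonneg hc (by simpa using hA.dotProduct_mulVec_nonneg y)

lemma posSemidef_fromBlocks_diag {A B : Matrix (Fin d) (Fin d) ℝ}
    (hA : A.PosSemidef) (hB : B.PosSemidef) :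
    (Matrix.fromBlocks A 0 0 B).PosSemidef := by
  refine posSemidef_iff_dotProduct_mulVec.mpr ⟨?_, ?_⟩
  · show _ᴴ = _
    rw [fromBlocks_conjTranspose, hA.isHermitian, hB.isHermitian]
    simp
  · intro y
    have hy : y = Sum.elim (y ∘ Sum.inl) (y ∘ Sum.inr) := (Sum.elim_comp_inl_inr y).symm
    rw [rstar]
    calc y ⬝ᵥ (fromBlocks A 0 0 B) *ᵥ y
        = (y ∘ Sum.inl) ⬝ᵥ A *ᵥ (y ∘ Sum.inl) + (y ∘ Sum.inr) ⬝ᵥ B *ᵥ (y ∘ Sum.inr) := by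
          conv_lhs => rw [hy, fromBlocks_mulVec]
          rw [sumElim_dotProduct_sumElim]
          simp [Sum.elim_comp_inl, Sum.elim_comp_inr]
      _ ≥ 0 := by
          have h1 := hA.dotProduct_mulVec_nonneg (y ∘ Sum.inl)
          have h2 := hB.dotProduct_mulVec_nonneg (y ∘ Sum.inr)
          rw [rstar] at h1 h2
          linarith
  
lemma Emat_posSemidef (hP₁ : P₁.PosDef) (hP₂ : P₂.PosDef) {ω : ℝ} (hω : ω ∈ Icc (0:ℝ) 1) :
    (Emat P₁ P₂ ω).PosSemidef :=
  posSemidef_fromBlocks_diag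
    (posSemidef_smul hP₁.inv.posSemidef hω.1)
    (posSemidef_smul hP₂.inv.posSemidef (by linarith [hω.2]))

lemma Mmat_posDef (hP₁ : P₁.PosDef) (hP₂ : P₂.PosDef) (hS : S.PosDef)
    {ω : ℝ} (hω : ω ∈ Icc (0:ℝ) 1) : (Mmat P₁ P₂ S ω).PosDef :=
  hS.inv.add_posSemidef (Emat_posSemidef hP₁ hP₂ hω)

lemma herm_transpose {n : Type*} {A : Matrix n n ℝ} (h : A.IsHermitian) : Aᵀ = A := by
  simpa using h.eq

lemma pd_mul_inv {n : Type*} [Fintype n] [DecidableEq n] {A : Matrix n n ℝ} (hA : A.PosDef) :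
    A * A⁻¹ = 1 :=
  Matrix.mul_nonsing_inv _ ((Matrix.isUnit_iff_isUnit_det _).1 hA.isUnit)

lemma pd_inv_mul {n : Type*} [Fintype n] [DecidableEq n] {A : Matrix n n ℝ} (hA : A.PosDef) :
    A⁻¹ * A = 1 :=
  Matrix.nonsing_inv_mul _ ((Matrix.isUnit_iff_isUnit_det _).1 hA.isUnit)

lemma Emat_transpose (hP₁ : P₁.PosDef) (hP₂ : P₂.PosDef) (ω : ℝ) :
    (Emat P₁ P₂ ω)ᵀ = Emat P₁ P₂ ω := by
  unfold Emat
  rw [fromBlocks_transpose, transpose_smul, transpose_smul, transpose_zero,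
    herm_transpose hP₁.inv.isHermitian, herm_transpose hP₂.inv.isHermitian]

lemma Mmat_transpose (hP₁ : P₁.PosDef) (hP₂ : P₂.PosDef) (hS : S.PosDef) (ω : ℝ) :
    (Mmat P₁ P₂ S ω)ᵀ = Mmat P₁ P₂ S ω := by
  unfold Mmat
  rw [transpose_add, herm_transpose hS.inv.isHermitian, Emat_transpose hP₁ hP₂]

lemma Bc_inv_eq (hP₁ : P₁.PosDef) (hP₂ : P₂.PosDef) (hS : S.PosDef)
    {ω : ℝ} (h0 : 0 < ω) (h1 : ω < 1) :
    (Bc d P₁ P₂ S ω)⁻¹ = Gmat P₁ P₂ S ω := by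
  have hωIcc : ω ∈ Icc (0:ℝ) 1 := ⟨le_of_lt h0, le_of_lt h1⟩
  set E := Emat P₁ P₂ ω with hE
  set M := Mmat P₁ P₂ S ω with hM
  set K := M⁻¹ with hK
  set D : Matrix (Fin d ⊕ Fin d) (Fin d ⊕ Fin d) ℝ :=
    Matrix.fromBlocks (ω⁻¹ • P₁) 0 0 ((1 - ω)⁻¹ • P₂) with hD
  have hMpd : M.PosDef := Mmat_posDef hP₁ hP₂ hS hωIcc
  have hMK : M * K = 1 := pd_mul_inv hMpd
  have hDE : D * E = 1 := by
    rw [hD, hE]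
    unfold Emat
    rw [fromBlocks_multiply]
    have hb1 : (ω⁻¹ • P₁) * (ω • P₁⁻¹) = 1 := by
      rw [Matrix.smul_mul, Matrix.mul_smul, smul_smul, inv_mul_cancel₀ (ne_of_gt h0),
        one_smul, pd_mul_inv hP₁]
    have hb2 : ((1 - ω)⁻¹ • P₂) * ((1 - ω) • P₂⁻¹) = 1 := by
      rw [Matrix.smul_mul, Matrix.mul_smul, smul_smul,
        inv_mul_cancel₀ (by linarith : (1:ℝ) - ω ≠ 0), one_smul, pd_mul_inv hP₂]
    simp [hb1, hb2]
  have hSM : S * M = 1 + S * E := by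
    rw [hM]
    unfold Mmat
    rw [Matrix.mul_add, pd_mul_inv hS, ← hE]
  apply Matrix.inv_eq_right_inv
  show (D + S) * (E - E * K * E) = 1
  rw [Matrix.add_mul, Matrix.mul_sub, Matrix.mul_sub]
  simp only [Matrix.mul_assoc]
  have e1 : D * (E * (K * E)) = K * E := by
    rw [← Matrix.mul_assoc, hDE, one_mul]
  have e2 : S * (E * (K * E)) = S * E - K * E := by
    have h5 : S * (E * (K * E)) = (S * E) * (K * E) := by rw [Matrix.mul_assoc]
    have h6 : (S * E) * (K * E) + K * E = (S * E + 1) * (K * E) := by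
      rw [Matrix.add_mul, Matrix.one_mul]
    have h7 : S * E + 1 = S * M := by rw [hSM, add_comm]
    have h8 : (S * M) * (K * E) = S * E := by
      rw [Matrix.mul_assoc, ← Matrix.mul_assoc M K E, hMK, Matrix.one_mul]
    have := h6.trans (by rw [h7, h8])
    rw [h5]
    exact eq_sub_of_add_eq this
  rw [hDE, e1, e2]
  abel

lemma toBlocks₂₂_posDef (hS : S.PosDef) : S.toBlocks₂₂.PosDef := by
  have hs : Sᵀ = S := herm_transpose hS.isHermitian
  refine posDef_iff_dotProduct_mulVec.mpr ⟨?_, ?_⟩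
  · show _ᴴ = _
    ext i j
    simp only [Matrix.conjTranspose_apply, Matrix.toBlocks₂₂, Matrix.of_apply, star_trivial]
    calc S (Sum.inr j) (Sum.inr i) = Sᵀ (Sum.inr i) (Sum.inr j) := rfl
      _ = S (Sum.inr i) (Sum.inr j) := by rw [hs]
  · intro y hy
    set w : (Fin d ⊕ Fin d) → ℝ := Sum.elim 0 y with hw
    have hwne : w ≠ 0 := by
      intro h
      apply hy
      funext i
      exact congrFun h (Sum.inr i)
    have hpos := hS.dotProduct_mulVec_pos hwne
    rw [rstar] at hpos
    rw [← Matrix.fromBlocks_toBlocks S, hw, fromBlocks_mulVec,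
      sumElim_dotProduct_sumElim] at hpos
    simp only [Sum.elim_comp_inl, Sum.elim_comp_inr, Matrix.mulVec_zero, zero_add,
      zero_dotProduct] at hpos
    rw [rstar]
    exact hpos

lemma toBlocks₁₁_posDef (hS : S.PosDef) : S.toBlocks₁₁.PosDef := by
  have hs : Sᵀ = S := herm_transpose hS.isHermitian
  refine posDef_iff_dotProduct_mulVec.mpr ⟨?_, ?_⟩
  · show _ᴴ = _
    ext i j
    simp only [Matrix.conjTranspose_apply, Matrix.toBlocks₁₁, Matrix.of_apply, star_trivial]
    calc S (Sum.inl j) (Sum.inl i) = Sᵀ (Sum.inl i) (Sum.inl j) := rfl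
      _ = S (Sum.inl i) (Sum.inl j) := by rw [hs]
  · intro y hy
    set w : (Fin d ⊕ Fin d) → ℝ := Sum.elim y 0 with hw
    have hwne : w ≠ 0 := by
      intro h
      apply hy
      funext i
      exact congrFun h (Sum.inl i)
    have hpos := hS.dotProduct_mulVec_pos hwne
    rw [rstar] at hpos
    rw [← Matrix.fromBlocks_toBlocks S, hw, fromBlocks_mulVec,
      sumElim_dotProduct_sumElim] at hpos
    simp only [Sum.elim_comp_inl, Sum.elim_comp_inr, Matrix.mulVec_zero, add_zero,
      zero_dotProduct] at hpos
    rw [rstar]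
    exact hpos

lemma Emat_zero : Emat P₁ P₂ (0:ℝ) = Matrix.fromBlocks 0 0 0 P₂⁻¹ := by
  unfold Emat; norm_num

lemma Emat_one : Emat P₁ P₂ (1:ℝ) = Matrix.fromBlocks P₁⁻¹ 0 0 0 := by
  unfold Emat; norm_num

lemma Gmat_zero (hP₁ : P₁.PosDef) (hP₂ : P₂.PosDef) (hS : S.PosDef) :
    Gmat P₁ P₂ S 0 = Matrix.fromBlocks 0 0 0 (P₂ + S.toBlocks₂₂)⁻¹ := by
  set T := P₂ + S.toBlocks₂₂ with hT
  have hTpd : T.PosDef := hP₂.add_posSemidef (toBlocks₂₂_posDef hS).posSemidef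
  set R : Matrix (Fin d ⊕ Fin d) (Fin d ⊕ Fin d) ℝ := Matrix.fromBlocks 0 0 0 T⁻¹ with hR
  set E0 : Matrix (Fin d ⊕ Fin d) (Fin d ⊕ Fin d) ℝ := Matrix.fromBlocks 0 0 0 P₂⁻¹ with hE0
  have hMpd : (Mmat P₁ P₂ S 0).PosDef :=
    Mmat_posDef hP₁ hP₂ hS (by constructor <;> norm_num)
  have hKM : (Mmat P₁ P₂ S 0)⁻¹ * Mmat P₁ P₂ S 0 = 1 := pd_inv_mul hMpd
  have key : P₂⁻¹ * (S.toBlocks₂₂ * T⁻¹) = P₂⁻¹ - T⁻¹ := by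
    have hsub : S.toBlocks₂₂ = T - P₂ := by rw [hT]; abel
    rw [hsub, Matrix.sub_mul, Matrix.mul_sub, pd_mul_inv hTpd, Matrix.mul_one,
      ← Matrix.mul_assoc, pd_inv_mul hP₂, Matrix.one_mul]
  have hSR : S * R = Matrix.fromBlocks 0 (S.toBlocks₁₂ * T⁻¹) 0 (S.toBlocks₂₂ * T⁻¹) := by
    conv_lhs => rw [← Matrix.fromBlocks_toBlocks S]
    rw [hR, fromBlocks_multiply]
    simp
  have hESR : E0 * (S * R) + R = E0 := by
    rw [hSR, hE0, hR, fromBlocks_multiply, fromBlocks_add]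
    simp [key]
  have hMSR : Mmat P₁ P₂ S 0 * (S * R) = E0 := by
    show (S⁻¹ + Emat P₁ P₂ 0) * (S * R) = E0
    rw [Emat_zero, ← hE0, Matrix.add_mul, ← Matrix.mul_assoc, pd_inv_mul hS, Matrix.one_mul]
    rw [add_comm]
    exact hESR
  have hKE : (Mmat P₁ P₂ S 0)⁻¹ * E0 = S * R := by
    rw [← hMSR, ← Matrix.mul_assoc, hKM, Matrix.one_mul]
  show Emat P₁ P₂ 0 - Emat P₁ P₂ 0 * (Mmat P₁ P₂ S 0)⁻¹ * Emat P₁ P₂ 0 = R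
  rw [Emat_zero, ← hE0, Matrix.mul_assoc, hKE]
  have : E0 * (S * R) = E0 - R := eq_sub_of_add_eq hESR
  rw [this]
  abel

lemma Gmat_one (hP₁ : P₁.PosDef) (hP₂ : P₂.PosDef) (hS : S.PosDef) :
    Gmat P₁ P₂ S 1 = Matrix.fromBlocks (P₁ + S.toBlocks₁₁)⁻¹ 0 0 0 := by
  set T := P₁ + S.toBlocks₁₁ with hT
  have hTpd : T.PosDef := hP₁.add_posSemidef (toBlocks₁₁_posDef hS).posSemidef
  set R : Matrix (Fin d ⊕ Fin d) (Fin d ⊕ Fin d) ℝ := Matrix.fromBlocks T⁻¹ 0 0 0 with hR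
  set E0 : Matrix (Fin d ⊕ Fin d) (Fin d ⊕ Fin d) ℝ := Matrix.fromBlocks P₁⁻¹ 0 0 0 with hE0
  have hMpd : (Mmat P₁ P₂ S 1).PosDef :=
    Mmat_posDef hP₁ hP₂ hS (by constructor <;> norm_num)
  have hKM : (Mmat P₁ P₂ S 1)⁻¹ * Mmat P₁ P₂ S 1 = 1 := pd_inv_mul hMpd
  have key : P₁⁻¹ * (S.toBlocks₁₁ * T⁻¹) = P₁⁻¹ - T⁻¹ := by
    have hsub : S.toBlocks₁₁ = T - P₁ := by rw [hT]; abel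
    rw [hsub, Matrix.sub_mul, Matrix.mul_sub, pd_mul_inv hTpd, Matrix.mul_one,
      ← Matrix.mul_assoc, pd_inv_mul hP₁, Matrix.one_mul]
  have hSR : S * R = Matrix.fromBlocks (S.toBlocks₁₁ * T⁻¹) 0 (S.toBlocks₂₁ * T⁻¹) 0 := by
    conv_lhs => rw [← Matrix.fromBlocks_toBlocks S]
    rw [hR, fromBlocks_multiply]
    simp
  have hESR : E0 * (S * R) + R = E0 := by
    rw [hSR, hE0, hR, fromBlocks_multiply, fromBlocks_add]
    simp [key]
  have hMSR : Mmat P₁ P₂ S 1 * (S * R) = E0 := by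
    show (S⁻¹ + Emat P₁ P₂ 1) * (S * R) = E0
    rw [Emat_one, ← hE0, Matrix.add_mul, ← Matrix.mul_assoc, pd_inv_mul hS, Matrix.one_mul]
    rw [add_comm]
    exact hESR
  have hKE : (Mmat P₁ P₂ S 1)⁻¹ * E0 = S * R := by
    rw [← hMSR, ← Matrix.mul_assoc, hKM, Matrix.one_mul]
  show Emat P₁ P₂ 1 - Emat P₁ P₂ 1 * (Mmat P₁ P₂ S 1)⁻¹ * Emat P₁ P₂ 1 = R
  rw [Emat_one, ← hE0, Matrix.mul_assoc, hKE]
  have : E0 * (S * R) = E0 - R := eq_sub_of_add_eq hESR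
  rw [this]
  abel

lemma dot_sym {n : Type*} [Fintype n] {A : Matrix n n ℝ} (hA : Aᵀ = A) (y z : n → ℝ) :
    y ⬝ᵥ A *ᵥ z = (A *ᵥ y) ⬝ᵥ z := by
  rw [dotProduct_mulVec]
  conv_lhs => rw [← hA]
  rw [vecMul_transpose]

lemma Emat_combo (a b t s : ℝ) (hts : t + s = 1) :
    Emat P₁ P₂ (t * a + s * b) = t • Emat P₁ P₂ a + s • Emat P₁ P₂ b := by
  have h11 : (t * a + s * b) • P₁⁻¹ = t • (a • P₁⁻¹) + s • (b • P₁⁻¹) := by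
    rw [smul_smul, smul_smul, ← add_smul]
  have h22 : (1 - (t * a + s * b)) • P₂⁻¹ = t • ((1 - a) • P₂⁻¹) + s • ((1 - b) • P₂⁻¹) := by
    rw [smul_smul, smul_smul, ← add_smul]
    congr 1
    linear_combination -hts
  unfold Emat
  conv_rhs => rw [fromBlocks_smul, fromBlocks_smul, fromBlocks_add]
  rw [h11, h22]
  simp

lemma Mmat_combo (a b t s : ℝ) (hts : t + s = 1) :
    Mmat P₁ P₂ S (t * a + s * b) = t • Mmat P₁ P₂ S a + s • Mmat P₁ P₂ S b := by
  unfold Mmat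
  rw [Emat_combo a b t s hts, smul_add, smul_add, add_add_add_comm, ← add_smul, hts, one_smul]

lemma q_identity (hP₁ : P₁.PosDef) (hP₂ : P₂.PosDef) (hS : S.PosDef) {ω : ℝ}
    (hω : ω ∈ Icc (0:ℝ) 1) (v u : Fin d ⊕ Fin d → ℝ) :
    v ⬝ᵥ Emat P₁ P₂ ω *ᵥ v - 2 * (u ⬝ᵥ Emat P₁ P₂ ω *ᵥ v) + u ⬝ᵥ Mmat P₁ P₂ S ω *ᵥ u
      = v ⬝ᵥ Gmat P₁ P₂ S ω *ᵥ v
        + (u - (Mmat P₁ P₂ S ω)⁻¹ *ᵥ Emat P₁ P₂ ω *ᵥ v) ⬝ᵥ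
            Mmat P₁ P₂ S ω *ᵥ (u - (Mmat P₁ P₂ S ω)⁻¹ *ᵥ Emat P₁ P₂ ω *ᵥ v) := by
  set E := Emat P₁ P₂ ω with hE
  set M := Mmat P₁ P₂ S ω with hM
  set K := M⁻¹ with hK
  set w : Fin d ⊕ Fin d → ℝ := K *ᵥ E *ᵥ v with hw
  have hMpd : M.PosDef := Mmat_posDef hP₁ hP₂ hS hω
  have hMK : M * K = 1 := pd_mul_inv hMpd
  have hMw : M *ᵥ w = E *ᵥ v := by
    rw [hw, Matrix.mulVec_mulVec, hMK, Matrix.one_mulVec]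
  have hEsym : Eᵀ = E := Emat_transpose hP₁ hP₂ ω
  have hMsym : Mᵀ = M := Mmat_transpose hP₁ hP₂ hS ω
  have hsq : (u - w) ⬝ᵥ M *ᵥ (u - w)
      = u ⬝ᵥ M *ᵥ u - 2 * (u ⬝ᵥ E *ᵥ v) + w ⬝ᵥ E *ᵥ v := by
    rw [Matrix.mulVec_sub, hMw, dotProduct_sub, sub_dotProduct, sub_dotProduct]
    have h1 : w ⬝ᵥ M *ᵥ u = u ⬝ᵥ E *ᵥ v := by
      rw [dot_sym hMsym, hMw, dotProduct_comm]
    rw [h1]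
    ring
  have hg : v ⬝ᵥ Gmat P₁ P₂ S ω *ᵥ v = v ⬝ᵥ E *ᵥ v - w ⬝ᵥ E *ᵥ v := by
    show v ⬝ᵥ (E - E * K * E) *ᵥ v = _
    rw [Matrix.sub_mulVec, dotProduct_sub]
    congr 1
    have h2 : (E * K * E) *ᵥ v = E *ᵥ w := by
      rw [hw, Matrix.mulVec_mulVec, Matrix.mulVec_mulVec, Matrix.mul_assoc]
    rw [h2, dot_sym hEsym, dotProduct_comm]
  rw [hg, hsq]
  ring

lemma no_double_opt (hP₁ : P₁.PosDef) (hP₂ : P₂.PosDef) (hS : S.PosDef)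
    {x : Fin d → ℝ} (hx : x ≠ 0) {a b : ℝ} (hab : a ≠ b) (u : Fin d ⊕ Fin d → ℝ)
    (h1 : Mmat P₁ P₂ S a *ᵥ u = Emat P₁ P₂ a *ᵥ (Sum.elim x x))
    (h2 : Mmat P₁ P₂ S b *ᵥ u = Emat P₁ P₂ b *ᵥ (Sum.elim x x)) : False := by
  set v : Fin d ⊕ Fin d → ℝ := Sum.elim x x with hv
  set Fm : Matrix (Fin d ⊕ Fin d) (Fin d ⊕ Fin d) ℝ :=
    Matrix.fromBlocks P₁⁻¹ 0 0 (-P₂⁻¹) with hF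
  have hdiff : Emat P₁ P₂ a - Emat P₁ P₂ b = (a - b) • Fm := by
    rw [sub_eq_iff_eq_add, hF]
    unfold Emat
    rw [fromBlocks_smul, fromBlocks_add]
    have hbr : (a - b) • (-P₂⁻¹) + (1 - b) • P₂⁻¹ = (1 - a) • P₂⁻¹ := by
      rw [smul_neg, ← neg_smul, ← add_smul]
      congr 1
      ring
    have htl : (a - b) • P₁⁻¹ + b • P₁⁻¹ = a • P₁⁻¹ := by
      rw [← add_smul]
      congr 1
      ring
    rw [hbr, htl]
    simp
  have hMd : Mmat P₁ P₂ S a - Mmat P₁ P₂ S b = (a - b) • Fm := by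
    show (S⁻¹ + Emat P₁ P₂ a) - (S⁻¹ + Emat P₁ P₂ b) = _
    rw [add_sub_add_left_eq_sub, hdiff]
  have h3 : ((a - b) • Fm) *ᵥ u = ((a - b) • Fm) *ᵥ v := by
    calc ((a - b) • Fm) *ᵥ u = (Mmat P₁ P₂ S a - Mmat P₁ P₂ S b) *ᵥ u := by rw [hMd]
      _ = Emat P₁ P₂ a *ᵥ v - Emat P₁ P₂ b *ᵥ v := by rw [Matrix.sub_mulVec, h1, h2]
      _ = (Emat P₁ P₂ a - Emat P₁ P₂ b) *ᵥ v := (Matrix.sub_mulVec _ _ _).symm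
      _ = ((a - b) • Fm) *ᵥ v := by rw [hdiff]
  have h4 : Fm *ᵥ u = Fm *ᵥ v := by
    have hne : a - b ≠ 0 := sub_ne_zero.mpr hab
    rw [smul_mulVec, smul_mulVec] at h3
    exact smul_right_injective _ hne h3
  have huv : u = v := by
    have hu : u = Sum.elim (u ∘ Sum.inl) (u ∘ Sum.inr) := (Sum.elim_comp_inl_inr u).symm
    rw [hF] at h4
    rw [hu, hv] at h4
    rw [fromBlocks_mulVec, fromBlocks_mulVec] at h4
    simp only [Sum.elim_comp_inl, Sum.elim_comp_inr, Matrix.zero_mulVec, add_zero,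
      zero_add] at h4
    have h4l : P₁⁻¹ *ᵥ (u ∘ Sum.inl) = P₁⁻¹ *ᵥ x := by
      funext i; exact congrFun h4 (Sum.inl i)
    have h4r : (-P₂⁻¹) *ᵥ (u ∘ Sum.inr) = (-P₂⁻¹) *ᵥ x := by
      funext i; exact congrFun h4 (Sum.inr i)
    have hl : u ∘ Sum.inl = x := by
      have h5 := congrArg (fun y => P₁ *ᵥ y) h4l
      simp only [Matrix.mulVec_mulVec, pd_mul_inv hP₁, Matrix.one_mulVec] at h5
      exact h5
    have hr : u ∘ Sum.inr = x := by
      rw [Matrix.neg_mulVec, Matrix.neg_mulVec, neg_inj] at h4r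
      have h5 := congrArg (fun y => P₂ *ᵥ y) h4r
      simp only [Matrix.mulVec_mulVec, pd_mul_inv hP₂, Matrix.one_mulVec] at h5
      exact h5
    rw [hu, hl, hr, hv]
  have h5 : S⁻¹ *ᵥ v = 0 := by
    rw [huv] at h1
    have h6 : S⁻¹ *ᵥ v + Emat P₁ P₂ a *ᵥ v = Emat P₁ P₂ a *ᵥ v := by
      rw [← Matrix.add_mulVec]; exact h1
    calc S⁻¹ *ᵥ v = (S⁻¹ *ᵥ v + Emat P₁ P₂ a *ᵥ v) - Emat P₁ P₂ a *ᵥ v := by abel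
      _ = 0 := by rw [h6]; abel
  have h7 : v = 0 := by
    have h8 := congrArg (fun y => S *ᵥ y) h5
    simp only [Matrix.mulVec_mulVec, pd_mul_inv hS, Matrix.one_mulVec,
      Matrix.mulVec_zero] at h8
    exact h8
  apply hx
  funext i
  exact congrFun h7 (Sum.inl i)

lemma AF_quad (hP₁ : P₁.PosDef) (hP₂ : P₂.PosDef) (hS : S.PosDef)
    (x : Fin d → ℝ) {ω : ℝ} (hω : ω ∈ Icc (0:ℝ) 1) :
    x ⬝ᵥ (AF d P₁ P₂ S ω) *ᵥ x
      = (Sum.elim x x) ⬝ᵥ Gmat P₁ P₂ S ω *ᵥ (Sum.elim x x) := by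
  rcases eq_or_ne ω 0 with h0 | h0
  · subst h0
    rw [show AF d P₁ P₂ S 0 = (P₂ + S.toBlocks₂₂)⁻¹ from if_pos rfl,
      Gmat_zero hP₁ hP₂ hS, fromBlocks_mulVec]
    simp only [Sum.elim_comp_inl, Sum.elim_comp_inr, Matrix.zero_mulVec, add_zero, zero_add]
    rw [sumElim_dotProduct_sumElim]
    simp
  rcases eq_or_ne ω 1 with h1 | h1
  · subst h1
    rw [show AF d P₁ P₂ S 1 = (P₁ + S.toBlocks₁₁)⁻¹ from by
        unfold AF; rw [if_neg one_ne_zero, if_pos rfl],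
      Gmat_one hP₁ hP₂ hS, fromBlocks_mulVec]
    simp only [Sum.elim_comp_inl, Sum.elim_comp_inr, Matrix.zero_mulVec, add_zero, zero_add]
    rw [sumElim_dotProduct_sumElim]
    simp
  · have h0' : 0 < ω := lt_of_le_of_ne hω.1 (Ne.symm h0)
    have h1' : ω < 1 := lt_of_le_of_ne hω.2 h1
    rw [show AF d P₁ P₂ S ω = (Hmat d)ᵀ * (Bc d P₁ P₂ S ω)⁻¹ * Hmat d from by
        unfold AF; rw [if_neg h0, if_neg h1]]
    rw [Bc_inv_eq hP₁ hP₂ hS h0' h1']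
    have hH : Hmat d *ᵥ x = Sum.elim x x := by
      unfold Hmat
      rw [fromRows_mulVec]
      simp
    rw [← Matrix.mulVec_mulVec, ← Matrix.mulVec_mulVec, dotProduct_mulVec,
      vecMul_transpose, hH]

end Facts

end ESCIAux

open ESCIAux in
/-- for every `x ≠ 0`, the map `ω ↦ xᵀ A_F(ω) x` is strictly concave
on `[0,1]`. -/
theorem hfun_strictConcaveOn (d : ℕ) (hd : 1 ≤ d)
    (P₁ P₂ : Matrix (Fin d) (Fin d) ℝ) (hP₁ : P₁.PosDef) (hP₂ : P₂.PosDef)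
    (S : Matrix (Fin d ⊕ Fin d) (Fin d ⊕ Fin d) ℝ) (hS : S.PosDef)
    (x : Fin d → ℝ) (hx : x ≠ 0) :
    StrictConcaveOn ℝ (Set.Icc (0 : ℝ) 1)
      (fun ω : ℝ => x ⬝ᵥ (AF d P₁ P₂ S ω) *ᵥ x) := by
  refine ⟨convex_Icc 0 1, ?_⟩
  intro a ha b hb hab t s ht hs hts
  simp only [smul_eq_mul]
  have hc : t * a + s * b ∈ Icc (0:ℝ) 1 :=
    ⟨by nlinarith [ha.1, hb.1], by nlinarith [ha.2, hb.2]⟩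
  rw [AF_quad hP₁ hP₂ hS x ha, AF_quad hP₁ hP₂ hS x hb, AF_quad hP₁ hP₂ hS x hc]
  set v : Fin d ⊕ Fin d → ℝ := Sum.elim x x with hv
  set c := t * a + s * b with hcdef
  set u : Fin d ⊕ Fin d → ℝ := (Mmat P₁ P₂ S c)⁻¹ *ᵥ Emat P₁ P₂ c *ᵥ v with hu
  set q : ℝ → ℝ := fun ω =>
    v ⬝ᵥ Emat P₁ P₂ ω *ᵥ v - 2 * (u ⬝ᵥ Emat P₁ P₂ ω *ᵥ v)
      + u ⬝ᵥ Mmat P₁ P₂ S ω *ᵥ u with hq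
  have hgc : v ⬝ᵥ Gmat P₁ P₂ S c *ᵥ v = q c := by
    have hid := q_identity hP₁ hP₂ hS hc v u
    have hz : u - (Mmat P₁ P₂ S c)⁻¹ *ᵥ Emat P₁ P₂ c *ᵥ v = 0 := by
      rw [hu]
      exact sub_self _
    rw [hz] at hid
    simp only [Matrix.mulVec_zero, dotProduct_zero, zero_dotProduct, add_zero] at hid
    exact hid.symm
  have hle : ∀ ω ∈ Icc (0:ℝ) 1, v ⬝ᵥ Gmat P₁ P₂ S ω *ᵥ v ≤ q ω := by
    intro ω hω
    have hid := q_identity hP₁ hP₂ hS hω v u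
    have hnn := (Mmat_posDef hP₁ hP₂ hS hω).posSemidef.dotProduct_mulVec_nonneg
      (u - (Mmat P₁ P₂ S ω)⁻¹ *ᵥ Emat P₁ P₂ ω *ᵥ v)
    rw [rstar] at hnn
    show _ ≤ v ⬝ᵥ Emat P₁ P₂ ω *ᵥ v - 2 * (u ⬝ᵥ Emat P₁ P₂ ω *ᵥ v)
      + u ⬝ᵥ Mmat P₁ P₂ S ω *ᵥ u
    linarith [hid]
  have hlt : ∀ ω ∈ Icc (0:ℝ) 1, Mmat P₁ P₂ S ω *ᵥ u ≠ Emat P₁ P₂ ω *ᵥ v →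
      v ⬝ᵥ Gmat P₁ P₂ S ω *ᵥ v < q ω := by
    intro ω hω hne
    have hid := q_identity hP₁ hP₂ hS hω v u
    have hz : u - (Mmat P₁ P₂ S ω)⁻¹ *ᵥ Emat P₁ P₂ ω *ᵥ v ≠ 0 := by
      intro h
      apply hne
      rw [sub_eq_zero] at h
      rw [h, Matrix.mulVec_mulVec, pd_mul_inv (Mmat_posDef hP₁ hP₂ hS hω),
        Matrix.one_mulVec]
    have hpos := (Mmat_posDef hP₁ hP₂ hS hω).dotProduct_mulVec_pos hz
    rw [rstar] at hpos
    show _ < v ⬝ᵥ Emat P₁ P₂ ω *ᵥ v - 2 * (u ⬝ᵥ Emat P₁ P₂ ω *ᵥ v)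
      + u ⬝ᵥ Mmat P₁ P₂ S ω *ᵥ u
    linarith [hid]
  have hqaff : q c = t * q a + s * q b := by
    simp only [hq]
    rw [hcdef, Emat_combo a b t s hts, Mmat_combo a b t s hts]
    simp only [Matrix.add_mulVec, smul_mulVec, dotProduct_add, dotProduct_smul,
      smul_eq_mul]
    ring
  have hclash : Mmat P₁ P₂ S a *ᵥ u ≠ Emat P₁ P₂ a *ᵥ v ∨
      Mmat P₁ P₂ S b *ᵥ u ≠ Emat P₁ P₂ b *ᵥ v := by
    by_contra hcon
    push_neg at hcon
    exact no_double_opt hP₁ hP₂ hS hx hab u hcon.1 hcon.2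
  rw [hgc, hqaff]
  rcases hclash with hca | hcb
  · have s1 := hlt a ha hca
    have s2 := hle b hb
    nlinarith
  · have s1 := hle a ha
    have s2 := hlt b hb hcb
    nlinarith
end
end

section
/- Let x ∈ ℝᵈ with x ≠ 0. If the right-hand derivative of h_x at ω = 0 is strictly negative, then g(x) = h_x(0) = xᵀ (P₂ + S₂₂)⁻¹ x; moreover the infimum defining g(x) is attained at some P* ∈ 𝒜, i.e. there exists P* ∈ 𝒜 with xᵀ Hᵀ (P*)⁻¹ H x = h_x(0). -/
open Matrix Set

noncomputable section

set_option linter.unusedSectionVars false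
set_option maxHeartbeats 1000000

variable {m n : Type*} [Fintype m] [Fintype n] [DecidableEq m] [DecidableEq n]

lemma herm_transpose_eq {A : Matrix m m ℝ} (h : A.IsHermitian) : Aᵀ = A := by
  rw [← conjTranspose_eq_transpose_of_trivial]; exact h

lemma quadForm_conj (A : Matrix m n ℝ) (B : Matrix m m ℝ) (x : n → ℝ) :
    x ⬝ᵥ (Aᵀ * B * A) *ᵥ x = (A *ᵥ x) ⬝ᵥ B *ᵥ (A *ᵥ x) := by
  rw [← mulVec_mulVec, ← mulVec_mulVec, dotProduct_mulVec, vecMul_transpose]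

lemma quad_lower {B : Matrix m m ℝ} (hB : B.PosDef) (z w : m → ℝ) :
    2 * (w ⬝ᵥ z) - w ⬝ᵥ B *ᵥ w ≤ z ⬝ᵥ B⁻¹ *ᵥ z := by
  have hdet : IsUnit B.det := (isUnit_iff_isUnit_det _).mp hB.isUnit
  have hBt : Bᵀ = B := herm_transpose_eq hB.1
  set r := w - B⁻¹ *ᵥ z with hr
  have h1 : B *ᵥ r = B *ᵥ w - z := by
    rw [hr, mulVec_sub, mulVec_mulVec, Matrix.mul_nonsing_inv _ hdet, one_mulVec]
  have h2 : 0 ≤ r ⬝ᵥ B *ᵥ r := by simpa using hB.posSemidef.dotProduct_mulVec_nonneg r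
  rw [h1] at h2
  have e2 : (B⁻¹ *ᵥ z) ⬝ᵥ (B *ᵥ w) = z ⬝ᵥ w := by
    rw [dotProduct_mulVec, ← mulVec_transpose, hBt, mulVec_mulVec,
      Matrix.mul_nonsing_inv _ hdet, one_mulVec]
  have e1 : r ⬝ᵥ (B *ᵥ w - z) =
      w ⬝ᵥ B *ᵥ w - z ⬝ᵥ w - (w ⬝ᵥ z - z ⬝ᵥ B⁻¹ *ᵥ z) := by
    rw [hr, dotProduct_sub, sub_dotProduct, sub_dotProduct, e2,
      dotProduct_comm (B⁻¹ *ᵥ z) z]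
  rw [e1] at h2
  have := dotProduct_comm z w
  linarith

lemma quad22 (R : Matrix (m ⊕ m) (m ⊕ m) ℝ) (u : m → ℝ) :
    Sum.elim 0 u ⬝ᵥ R *ᵥ Sum.elim 0 u = u ⬝ᵥ R.toBlocks₂₂ *ᵥ u := by
  conv_lhs => rw [← fromBlocks_toBlocks R]
  rw [fromBlocks_mulVec]
  simp [sumElim_dotProduct_sumElim]

lemma psd_smul {c : ℝ} (hc : 0 ≤ c) {A : Matrix m m ℝ} (hA : A.PosSemidef) :
    (c • A).PosSemidef := by
  refine PosSemidef.of_dotProduct_mulVec_nonneg ?_ fun y => ?_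
  · unfold Matrix.IsHermitian
    rw [conjTranspose_smul]
    simp only [star_trivial]
    rw [hA.1]
  · have := hA.dotProduct_mulVec_nonneg y
    simp only [smul_mulVec, dotProduct_smul, smul_eq_mul] at *
    positivity

lemma psd_blockdiag {A D : Matrix m m ℝ} (hA : A.PosSemidef) (hD : D.PosSemidef) :
    (fromBlocks A 0 0 D).PosSemidef := by
  refine PosSemidef.of_dotProduct_mulVec_nonneg ?_ fun y => ?_
  · rw [Matrix.isHermitian_fromBlocks_iff]
    exact ⟨hA.1, by simp, by simp, hD.1⟩
  · have hy : y = Sum.elim (y ∘ Sum.inl) (y ∘ Sum.inr) := (Sum.elim_comp_inl_inr y).symm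
    rw [hy]
    rw [fromBlocks_mulVec]
    simp only [zero_mulVec, add_zero, zero_add, star_trivial,
      sumElim_dotProduct_sumElim, Sum.elim_comp_inl, Sum.elim_comp_inr]
    have := hA.dotProduct_mulVec_nonneg (y ∘ Sum.inl)
    have := hD.dotProduct_mulVec_nonneg (y ∘ Sum.inr)
    simp only [star_trivial] at *
    linarith

lemma vecMulVec_mulVec' (v : m → ℝ) (w : n → ℝ) (y : n → ℝ) :
    vecMulVec v w *ᵥ y = (w ⬝ᵥ y) • v := by
  ext i
  simp only [mulVec, dotProduct, vecMulVec_apply, Pi.smul_apply, smul_eq_mul,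
    Finset.mul_sum]
  rw [Finset.sum_mul]
  exact Finset.sum_congr rfl fun j _ => by ring

lemma inf_attained {α : Type*} (A : Set α) (f : A → ℝ) (b : ℝ) (P : α) (hP : P ∈ A)
    (hlb : ∀ p : A, b ≤ f p) (hval : f ⟨P, hP⟩ = b) : (⨅ p : A, f p) = b := by
  haveI : Nonempty A := ⟨⟨P, hP⟩⟩
  refine le_antisymm (le_trans (ciInf_le ⟨b, ?_⟩ ⟨P, hP⟩) (le_of_eq hval)) (le_ciInf hlb)
  rintro r ⟨pp, rfl⟩
  exact hlb pp


/-- The fused ESCI bound `B_F(ω) = A_F(ω)⁻¹`. -/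
def BF (d : ℕ) (P₁ P₂ : Matrix (Fin d) (Fin d) ℝ)
    (S : Matrix (Fin d ⊕ Fin d) (Fin d ⊕ Fin d) ℝ) (ω : ℝ) :
    Matrix (Fin d) (Fin d) ℝ :=
  (AF d P₁ P₂ S ω)⁻¹

/-- `g(x) = inf_{P ∈ 𝒜} xᵀ Hᵀ P⁻¹ H x`. -/
def gfun (d : ℕ) (P₁ P₂ : Matrix (Fin d) (Fin d) ℝ)
    (S : Matrix (Fin d ⊕ Fin d) (Fin d ⊕ Fin d) ℝ) (x : Fin d → ℝ) : ℝ :=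
  ⨅ P : (Adm d P₁ P₂ S),
    x ⬝ᵥ ((Hmat d)ᵀ * ((P : Matrix (Fin d ⊕ Fin d) (Fin d ⊕ Fin d) ℝ))⁻¹ * Hmat d) *ᵥ x

/-- `h_x(ω) = xᵀ A_F(ω) x`. -/
def hfun (d : ℕ) (P₁ P₂ : Matrix (Fin d) (Fin d) ℝ)
    (S : Matrix (Fin d ⊕ Fin d) (Fin d ⊕ Fin d) ℝ) (x : Fin d → ℝ) (ω : ℝ) : ℝ :=
  x ⬝ᵥ (AF d P₁ P₂ S ω) *ᵥ x

/-- if the right-hand derivative of `h_x` at `ω = 0` is strictly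
negative, then `g(x) = h_x(0) = xᵀ (P₂ + S₂₂)⁻¹ x`, and the infimum defining
`g(x)` is attained at some `P* ∈ 𝒜`. -/
theorem gfun_eq_hfun_zero_of_deriv_neg (d : ℕ) (hd : 1 ≤ d)
    (P₁ P₂ : Matrix (Fin d) (Fin d) ℝ) (hP₁ : P₁.PosDef) (hP₂ : P₂.PosDef)
    (S : Matrix (Fin d ⊕ Fin d) (Fin d ⊕ Fin d) ℝ) (hS : S.PosDef)
    (x : Fin d → ℝ) (hx : x ≠ 0) (c : ℝ)
    (hder : HasDerivWithinAt (hfun d P₁ P₂ S x) c (Set.Icc (0 : ℝ) 1) 0)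
    (hneg : c < 0) :
    gfun d P₁ P₂ S x = hfun d P₁ P₂ S x 0 ∧
    hfun d P₁ P₂ S x 0 = x ⬝ᵥ (P₂ + S.toBlocks₂₂)⁻¹ *ᵥ x ∧
    ∃ P ∈ Adm d P₁ P₂ S,
      x ⬝ᵥ ((Hmat d)ᵀ * P⁻¹ * Hmat d) *ᵥ x = hfun d P₁ P₂ S x 0 := by
  classical
  have hSpsd := hS.posSemidef
  have hS22 : (S.toBlocks₂₂).PosSemidef := hSpsd.submatrix Sum.inr
  have hS_t : Sᵀ = S := herm_transpose_eq hS.1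
  set M := P₂ + S.toBlocks₂₂ with hM_def
  have hM : M.PosDef := hP₂.add_posSemidef hS22
  have hMdet : IsUnit M.det := (isUnit_iff_isUnit_det _).mp hM.isUnit
  set u := M⁻¹ *ᵥ x with hu_def
  have hMu : M *ᵥ u = x := by
    rw [hu_def, mulVec_mulVec, Matrix.mul_nonsing_inv _ hMdet, one_mulVec]
  have hu0 : u ≠ 0 := by
    intro h; apply hx; rw [← hMu, h, mulVec_zero]
  have hAF0 : AF d P₁ P₂ S 0 = M⁻¹ := by
    unfold AF
    rw [if_pos rfl, hM_def]
  have h0 : hfun d P₁ P₂ S x 0 = x ⬝ᵥ u := by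
    unfold hfun
    rw [hAF0, ← hu_def]
  have hHx : Hmat d *ᵥ x = Sum.elim x x := by
    rw [Hmat, fromRows_mulVec]; simp
  -- uniform lower bound
  have lower : ∀ P ∈ Adm d P₁ P₂ S,
      x ⬝ᵥ u ≤ x ⬝ᵥ ((Hmat d)ᵀ * P⁻¹ * Hmat d) *ᵥ x := by
    rintro P ⟨Q, hQ, hQ11, hQ22, rfl⟩
    have hPD : (Q + S).PosDef := Matrix.PosDef.posSemidef_add hQ hS
    have hb : (Q + S).toBlocks₂₂ = M := by
      rw [hM_def, ← hQ22]; ext i j; simp [toBlocks₂₂]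
    have key := quad_lower hPD (Sum.elim x x) (Sum.elim 0 u)
    rw [quad22, hb] at key
    have e1 : Sum.elim (0 : Fin d → ℝ) u ⬝ᵥ Sum.elim x x = u ⬝ᵥ x := by
      simp [sumElim_dotProduct_sumElim]
    have e2 : u ⬝ᵥ M *ᵥ u = u ⬝ᵥ x := by rw [hMu]
    rw [e1, e2] at key
    rw [quadForm_conj, hHx]
    have := dotProduct_comm x u
    linarith
  -- scalars
  set v := x - S.toBlocks₁₂ *ᵥ u with hv_def
  have hP1det : IsUnit P₁.det := (isUnit_iff_isUnit_det _).mp hP₁.isUnit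
  set a := P₁⁻¹ *ᵥ v with ha_def
  have hP1a : P₁ *ᵥ a = v := by
    rw [ha_def, mulVec_mulVec, Matrix.mul_nonsing_inv _ hP1det, one_mulVec]
  set t := u ⬝ᵥ P₂ *ᵥ u with ht_def
  have ht : 0 < t := by simpa using hP₂.dotProduct_mulVec_pos hu0
  set k1 := a ⬝ᵥ x with hk1_def
  set p := a ⬝ᵥ P₁ *ᵥ a with hp_def
  set q11 := a ⬝ᵥ S.toBlocks₁₁ *ᵥ a with hq11_def
  set q12 := a ⬝ᵥ S.toBlocks₁₂ *ᵥ u with hq12_def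
  set q21 := u ⬝ᵥ S.toBlocks₂₁ *ᵥ a with hq21_def
  set q22 := u ⬝ᵥ S.toBlocks₂₂ *ᵥ u with hq22_def
  have htq : t + q22 = u ⬝ᵥ x := by
    rw [ht_def, hq22_def, ← dotProduct_add, ← add_mulVec, ← hM_def, hMu]
  -- the comparison function
  set φ : ℝ → ℝ := fun ω =>
    2*(ω*k1 + u ⬝ᵥ x) - (ω*p + (1-ω)⁻¹*t + ω^2*q11 + ω*q12 + ω*q21 + q22)
    with hφ_def
  have hφ0 : φ 0 = hfun d P₁ P₂ S x 0 := by
    rw [h0, hφ_def]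
    simp only []
    rw [dotProduct_comm x u]
    have : (1 - (0:ℝ))⁻¹ = 1 := by norm_num
    rw [this]
    nlinarith [htq]
  have hcomp : ∀ ω ∈ Ioc (0:ℝ) (1/2), φ ω ≤ hfun d P₁ P₂ S x ω := by
    rintro ω ⟨hω0, hω2⟩
    have hω1 : ω ≠ 1 := by intro h; rw [h] at hω2; norm_num at hω2
    have h1ω : (0:ℝ) < 1 - ω := by linarith [hω2]
    have hN : (fromBlocks (ω⁻¹ • P₁) 0 0 ((1-ω)⁻¹ • P₂)
        : Matrix (Fin d ⊕ Fin d) (Fin d ⊕ Fin d) ℝ).PosSemidef :=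
      psd_blockdiag (psd_smul (by positivity) hP₁.posSemidef)
        (psd_smul (by positivity) hP₂.posSemidef)
    have hBc : (Bc d P₁ P₂ S ω).PosDef := by
      rw [Bc]; exact Matrix.PosDef.posSemidef_add hN hS
    have key := quad_lower hBc (Sum.elim x x) (Sum.elim (ω • a) u)
    have hh : hfun d P₁ P₂ S x ω
        = Sum.elim x x ⬝ᵥ (Bc d P₁ P₂ S ω)⁻¹ *ᵥ Sum.elim x x := by
      simp only [hfun, AF, if_neg hω0.ne', if_neg hω1]
      rw [quadForm_conj, hHx]
    rw [hh]
    refine le_trans (le_of_eq ?_) key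
    have e1 : Sum.elim (ω • a) u ⬝ᵥ Sum.elim x x = ω * k1 + u ⬝ᵥ x := by
      simp [sumElim_dotProduct_sumElim, smul_dotProduct, hk1_def]
    have eN : Sum.elim (ω • a) u ⬝ᵥ
        (fromBlocks (ω⁻¹ • P₁) 0 0 ((1-ω)⁻¹ • P₂)
          : Matrix (Fin d ⊕ Fin d) (Fin d ⊕ Fin d) ℝ) *ᵥ Sum.elim (ω • a) u
        = ω*p + (1-ω)⁻¹*t := by
      rw [fromBlocks_mulVec]
      simp only [zero_mulVec, add_zero, zero_add, sumElim_dotProduct_sumElim,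
        Sum.elim_comp_inl, Sum.elim_comp_inr,
        smul_mulVec, mulVec_smul, smul_zero, smul_dotProduct, dotProduct_smul, smul_eq_mul]
      rw [hp_def, ht_def]
      field_simp
    have eS : Sum.elim (ω • a) u ⬝ᵥ S *ᵥ Sum.elim (ω • a) u
        = ω^2*q11 + ω*q12 + ω*q21 + q22 := by
      conv_lhs => rw [← fromBlocks_toBlocks S, fromBlocks_mulVec]
      simp only [sumElim_dotProduct_sumElim, dotProduct_add, mulVec_smul,
        Sum.elim_comp_inl, Sum.elim_comp_inr,
        smul_dotProduct, dotProduct_smul, smul_eq_mul]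
      rw [hq11_def, hq12_def, hq21_def, hq22_def]
      ring
    have e2 : Sum.elim (ω • a) u ⬝ᵥ (Bc d P₁ P₂ S ω) *ᵥ Sum.elim (ω • a) u
        = ω*p + (1-ω)⁻¹*t + ω^2*q11 + ω*q12 + ω*q21 + q22 := by
      rw [Bc, add_mulVec, dotProduct_add, eN, eS]; ring
    rw [e1, e2, hφ_def]
  -- derivative of φ at 0
  have hφd : HasDerivAt φ (2*k1 - (p + t + q12 + q21)) 0 := by
    rw [hφ_def]
    have h1 : HasDerivAt (fun ω : ℝ => (1 - ω)⁻¹) 1 0 := by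
      have h2 : HasDerivAt (fun ω : ℝ => 1 - ω) (-1) 0 := (hasDerivAt_id 0).const_sub 1
      have h3 := h2.inv (by norm_num)
      exact h3.congr_deriv (by norm_num)
    have A1 : HasDerivAt (fun ω : ℝ => 2*(ω*k1 + u ⬝ᵥ x)) (2*k1) 0 := by
      have := (((hasDerivAt_id (0:ℝ)).mul_const k1).add_const (u ⬝ᵥ x)).const_mul 2
      exact this.congr_deriv (by ring)
    have A2 : HasDerivAt (fun ω : ℝ =>
        ω*p + (1-ω)⁻¹*t + ω^2*q11 + ω*q12 + ω*q21 + q22) (p + t + q12 + q21) 0 := by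
      have B1 := (hasDerivAt_id (0:ℝ)).mul_const p
      have B2 := h1.mul_const t
      have B3 := (hasDerivAt_pow 2 (0:ℝ)).mul_const q11
      have B4 := (hasDerivAt_id (0:ℝ)).mul_const q12
      have B5 := (hasDerivAt_id (0:ℝ)).mul_const q21
      have := ((((B1.add B2).add B3).add B4).add B5).add_const q22
      exact this.congr_deriv (by norm_num)
    exact A1.sub A2
  -- right derivative comparison
  have hDc : 0 ≤ c - (2*k1 - (p + t + q12 + q21)) := by
    have hsub : Icc (0:ℝ) (1/2) ⊆ Icc (0:ℝ) 1 := Icc_subset_Icc le_rfl (by norm_num)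
    have hψder : HasDerivWithinAt (fun ω => hfun d P₁ P₂ S x ω - φ ω)
        (c - (2*k1 - (p + t + q12 + q21))) (Icc (0:ℝ) (1/2)) 0 :=
      (hder.mono hsub).sub hφd.hasDerivWithinAt
    have hslope := hasDerivWithinAt_iff_tendsto_slope.mp hψder
    have hne : (nhdsWithin (0:ℝ) (Icc (0:ℝ) (1/2) \ {0})).NeBot := by
      rw [Icc_diff_left]
      apply mem_closure_iff_nhdsWithin_neBot.mp
      rw [closure_Ioc (by norm_num : (0:ℝ) ≠ 1/2)]
      exact ⟨le_rfl, by norm_num⟩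
    refine ge_of_tendsto hslope ?_
    filter_upwards [self_mem_nhdsWithin] with ω hω
    rw [Icc_diff_left] at hω
    have hψ0 : hfun d P₁ P₂ S x 0 - φ 0 = 0 := by rw [hφ0]; ring
    have hψω : 0 ≤ hfun d P₁ P₂ S x ω - φ ω := by
      have := hcomp ω hω; linarith
    rw [slope_def_field]
    apply div_nonneg
    · rw [hψ0]; linarith
    · linarith [hω.1]
  -- identify the derivative
  have hq21eq : q21 = q12 := by
    have hS21 : S.toBlocks₂₁ = (S.toBlocks₁₂)ᵀ := by
      ext i j
      have h := congrFun (congrFun hS_t (Sum.inr i)) (Sum.inl j)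
      simpa [toBlocks₂₁, toBlocks₁₂, transpose_apply] using h.symm
    rw [hq21_def, hq12_def, hS21, dotProduct_mulVec, vecMul_transpose,
      dotProduct_comm]
  have hpva : p = v ⬝ᵥ a := by rw [hp_def, hP1a, dotProduct_comm]
  have hk1va : k1 = v ⬝ᵥ a + q12 := by
    have hxv : x = v + S.toBlocks₁₂ *ᵥ u := by
      rw [hv_def, sub_add_cancel]
    rw [hk1_def, hxv, dotProduct_add, dotProduct_comm v a, hq12_def]
  have hst : v ⬝ᵥ a < t := by
    have : 2*k1 - (p + t + q12 + q21) = v ⬝ᵥ a - t := by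
      rw [hq21eq, hpva, hk1va]; ring
    rw [this] at hDc
    linarith
  have hs0 : 0 ≤ v ⬝ᵥ a := by
    have h := hP₁.inv.posSemidef.dotProduct_mulVec_nonneg v
    simpa [← ha_def] using h
  -- construct the optimal matrix
  set mm := P₂ *ᵥ u with hmm_def
  have hmu : mm ⬝ᵥ u = t := by rw [hmm_def, ht_def, dotProduct_comm]
  have hP2t : P₂ᵀ = P₂ := herm_transpose_eq hP₂.1
  have hCS : ∀ y : Fin d → ℝ, (mm ⬝ᵥ y)^2 ≤ t * (y ⬝ᵥ P₂ *ᵥ y) := by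
    intro y
    have h2 : 0 ≤ ((mm ⬝ᵥ y) • u - t • y) ⬝ᵥ P₂ *ᵥ ((mm ⬝ᵥ y) • u - t • y) := by
      simpa using hP₂.posSemidef.dotProduct_mulVec_nonneg ((mm ⬝ᵥ y) • u - t • y)
    have e : u ⬝ᵥ P₂ *ᵥ y = mm ⬝ᵥ y := by
      rw [dotProduct_mulVec, ← mulVec_transpose, hP2t, ← hmm_def]
    have e2 : y ⬝ᵥ P₂ *ᵥ u = mm ⬝ᵥ y := by
      rw [← hmm_def, dotProduct_comm]
    have expand : ((mm ⬝ᵥ y) • u - t • y) ⬝ᵥ P₂ *ᵥ ((mm ⬝ᵥ y) • u - t • y)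
        = (mm ⬝ᵥ y)^2*t - 2*t*(mm ⬝ᵥ y)^2 + t^2*(y ⬝ᵥ P₂ *ᵥ y) := by
      rw [mulVec_sub, mulVec_smul, mulVec_smul, dotProduct_sub, sub_dotProduct,
        sub_dotProduct]
      simp only [smul_dotProduct, dotProduct_smul, smul_eq_mul]
      rw [e, e2, ← ht_def]
      ring
    rw [expand] at h2
    nlinarith [ht]
  set K := t⁻¹ • vecMulVec v mm with hK_def
  have hKu : K *ᵥ u = v := by
    rw [hK_def, smul_mulVec, vecMulVec_mulVec', hmu, smul_smul,
      inv_mul_cancel₀ ht.ne', one_smul]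
  haveI := hP₁.isUnit.invertible
  have hQpsd : (fromBlocks P₁ K Kᴴ P₂).PosSemidef := by
    rw [Matrix.PosDef.fromBlocks₁₁ K P₂ hP₁]
    refine PosSemidef.of_dotProduct_mulVec_nonneg ((hP₂.1).sub (isHermitian_conjTranspose_mul_mul K hP₁.1.inv)) fun y => ?_
    simp only [star_trivial, sub_mulVec, dotProduct_sub]
    have hKH : (Kᴴ : Matrix (Fin d) (Fin d) ℝ) = Kᵀ :=
      conjTranspose_eq_transpose_of_trivial K
    rw [hKH, quadForm_conj]
    have hKy : K *ᵥ y = (t⁻¹ * (mm ⬝ᵥ y)) • v := by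
      rw [hK_def, smul_mulVec, vecMulVec_mulVec', smul_smul]
    rw [hKy]
    simp only [smul_dotProduct, mulVec_smul, dotProduct_smul, smul_eq_mul]
    rw [← ha_def]
    have hcs := hCS y
    have hY : 0 ≤ y ⬝ᵥ P₂ *ᵥ y := by simpa using hP₂.posSemidef.dotProduct_mulVec_nonneg y
    have hti : t * t⁻¹ = 1 := mul_inv_cancel₀ ht.ne'
    have h1 : t⁻¹*(mm ⬝ᵥ y)*(t⁻¹*(mm ⬝ᵥ y)*(v ⬝ᵥ a))
        = (mm ⬝ᵥ y)^2*(t⁻¹*t⁻¹)*(v ⬝ᵥ a) := by ring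
    have h2 : (mm ⬝ᵥ y)^2*(t⁻¹*t⁻¹)*(v ⬝ᵥ a)
        ≤ (t*(y ⬝ᵥ P₂ *ᵥ y))*(t⁻¹*t⁻¹)*(v ⬝ᵥ a) :=
      mul_le_mul_of_nonneg_right (mul_le_mul_of_nonneg_right hcs (by positivity)) hs0
    have h3 : (t*(y ⬝ᵥ P₂ *ᵥ y))*(t⁻¹*t⁻¹)*(v ⬝ᵥ a)
        = (y ⬝ᵥ P₂ *ᵥ y)*((v ⬝ᵥ a)*t⁻¹)*(t*t⁻¹) := by ring
    have h4 : (v ⬝ᵥ a)*t⁻¹ ≤ 1 := by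
      rw [← hti]; exact mul_le_mul_of_nonneg_right hst.le (by positivity)
    have h5 : (y ⬝ᵥ P₂ *ᵥ y)*((v ⬝ᵥ a)*t⁻¹) ≤ (y ⬝ᵥ P₂ *ᵥ y) :=
      mul_le_of_le_one_right hY h4
    rw [h3, hti, mul_one] at h2
    linarith [h1, h2, h5]
  set Pstar := fromBlocks P₁ K Kᴴ P₂ + S with hPs_def
  have hmem : Pstar ∈ Adm d P₁ P₂ S :=
    ⟨fromBlocks P₁ K Kᴴ P₂, hQpsd, by simp [toBlocks_fromBlocks₁₁],
      by simp [toBlocks_fromBlocks₂₂], rfl⟩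
  have hPsPD : Pstar.PosDef := Matrix.PosDef.posSemidef_add hQpsd hS
  have hPsw : Pstar *ᵥ Sum.elim (0 : Fin d → ℝ) u = Sum.elim x x := by
    rw [hPs_def, add_mulVec, fromBlocks_mulVec]
    conv_lhs => rw [← fromBlocks_toBlocks S]
    rw [fromBlocks_mulVec]
    simp only [Sum.elim_comp_inl, Sum.elim_comp_inr, mulVec_zero, zero_add,
      add_zero, hKu]
    ext (i | i)
    · have : v + S.toBlocks₁₂ *ᵥ u = x := by rw [hv_def, sub_add_cancel]
      simpa using congrFun this i
    · have : P₂ *ᵥ u + S.toBlocks₂₂ *ᵥ u = x := by rw [← add_mulVec, ← hM_def, hMu]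
      simpa using congrFun this i
  have hPinvz : Pstar⁻¹ *ᵥ Sum.elim x x = Sum.elim (0 : Fin d → ℝ) u := by
    rw [← hPsw, mulVec_mulVec,
      Matrix.nonsing_inv_mul _ ((isUnit_iff_isUnit_det _).mp hPsPD.isUnit), one_mulVec]
  have hval : x ⬝ᵥ ((Hmat d)ᵀ * Pstar⁻¹ * Hmat d) *ᵥ x = x ⬝ᵥ u := by
    rw [quadForm_conj, hHx, hPinvz]
    simp [sumElim_dotProduct_sumElim]
  refine ⟨?_, by rw [h0, hu_def], Pstar, hmem, by rw [hval, h0]⟩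
  -- the infimum
  rw [h0]
  unfold gfun
  exact inf_attained (Adm d P₁ P₂ S)
    (fun P => x ⬝ᵥ ((Hmat d)ᵀ * (P : Matrix (Fin d ⊕ Fin d) (Fin d ⊕ Fin d) ℝ)⁻¹ * Hmat d) *ᵥ x)
    (x ⬝ᵥ u) Pstar hmem (fun pp => lower pp.1 pp.2) hval
end
end

section
/- Let x ∈ ℝᵈ with x ≠ 0, and suppose ω₀ ∈ [0,1] is such that the derivative of h_x within [0,1] vanishes at ω₀ (one-sided at the endpoints). Then ω₀ is the unique point of [0,1] with this property, g(x) = h_x(ω₀), and the infimum defining g(x) is attained at some P* ∈ 𝒜, i.e. there exists P* ∈ 𝒜 with xᵀ Hᵀ (P*)⁻¹ H x = h_x(ω₀). -/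
open Matrix Set

noncomputable section

namespace GfunAux

variable {d : ℕ}

def Dm (P₁ P₂ : Matrix (Fin d) (Fin d) ℝ) : Matrix (Fin d ⊕ Fin d) (Fin d ⊕ Fin d) ℝ :=
  Matrix.fromBlocks P₁ 0 0 P₂

def Em (d : ℕ) (ω : ℝ) : Matrix (Fin d ⊕ Fin d) (Fin d ⊕ Fin d) ℝ :=
  Matrix.fromBlocks (ω • 1) 0 0 ((1 - ω) • 1)

def Jm (d : ℕ) : Matrix (Fin d ⊕ Fin d) (Fin d ⊕ Fin d) ℝ :=
  Matrix.fromBlocks 1 0 0 (-1)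

def Gm (P₁ P₂ : Matrix (Fin d) (Fin d) ℝ)
    (S : Matrix (Fin d ⊕ Fin d) (Fin d ⊕ Fin d) ℝ) (ω : ℝ) :
    Matrix (Fin d ⊕ Fin d) (Fin d ⊕ Fin d) ℝ :=
  Dm P₁ P₂ + Em d ω * S

def Fm (P₁ P₂ : Matrix (Fin d) (Fin d) ℝ)
    (S : Matrix (Fin d ⊕ Fin d) (Fin d ⊕ Fin d) ℝ) (ω : ℝ) :
    Matrix (Fin d ⊕ Fin d) (Fin d ⊕ Fin d) ℝ :=
  (Gm P₁ P₂ S ω)⁻¹ * Em d ω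

lemma dot_split (u w : (Fin d ⊕ Fin d) → ℝ) :
    u ⬝ᵥ w = (u ∘ Sum.inl) ⬝ᵥ (w ∘ Sum.inl) + (u ∘ Sum.inr) ⬝ᵥ (w ∘ Sum.inr) := by
  simp [dotProduct, Fintype.sum_sum_type, Function.comp]

lemma mulVec_blocks (A B C D' : Matrix (Fin d) (Fin d) ℝ) (u : (Fin d ⊕ Fin d) → ℝ) :
    (Matrix.fromBlocks A B C D') *ᵥ u =
      Sum.elim (A *ᵥ (u ∘ Sum.inl) + B *ᵥ (u ∘ Sum.inr))
        (C *ᵥ (u ∘ Sum.inl) + D' *ᵥ (u ∘ Sum.inr)) := by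
  rw [Matrix.fromBlocks_mulVec]

lemma Em_mulVec (ω : ℝ) (u : (Fin d ⊕ Fin d) → ℝ) :
    Em d ω *ᵥ u = Sum.elim (ω • (u ∘ Sum.inl)) ((1 - ω) • (u ∘ Sum.inr)) := by
  rw [Em, mulVec_blocks]
  simp [Matrix.smul_mulVec]

lemma Dm_mulVec (P₁ P₂ : Matrix (Fin d) (Fin d) ℝ) (u : (Fin d ⊕ Fin d) → ℝ) :
    Dm P₁ P₂ *ᵥ u = Sum.elim (P₁ *ᵥ (u ∘ Sum.inl)) (P₂ *ᵥ (u ∘ Sum.inr)) := by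
  rw [Dm, mulVec_blocks]; simp

lemma Jm_mulVec (u : (Fin d ⊕ Fin d) → ℝ) :
    Jm d *ᵥ u = Sum.elim (u ∘ Sum.inl) (-(u ∘ Sum.inr)) := by
  rw [Jm, mulVec_blocks]; simp [Matrix.neg_mulVec]

lemma sum_elim_eq_zero {a b : Fin d → ℝ} (h : Sum.elim a b = 0) : a = 0 ∧ b = 0 := by
  constructor <;> ext i
  · exact congrFun h (Sum.inl i)
  · exact congrFun h (Sum.inr i)

/-- real `PosDef` quadratic form -/
lemma pd_quad {m : Type*} [Fintype m] {M : Matrix m m ℝ} (hM : M.PosDef)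
    {y : m → ℝ} (hy : y ≠ 0) : 0 < y ⬝ᵥ M *ᵥ y := by
  simpa using hM.dotProduct_mulVec_pos hy

lemma psd_quad {m : Type*} [Fintype m] {M : Matrix m m ℝ} (hM : M.PosSemidef)
    (y : m → ℝ) : 0 ≤ y ⬝ᵥ M *ᵥ y := by
  simpa using hM.dotProduct_mulVec_nonneg y

lemma pd_quad_zero {m : Type*} [Fintype m] {M : Matrix m m ℝ} (hM : M.PosDef)
    {y : m → ℝ} (h : y ⬝ᵥ M *ᵥ y ≤ 0) : y = 0 := by
  by_contra hy
  exact absurd (pd_quad hM hy) (not_lt.mpr h)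

lemma herm_transpose {m : Type*} {M : Matrix m m ℝ} (hM : M.IsHermitian) : Mᵀ = M := by
  rw [← Matrix.conjTranspose_eq_transpose_of_trivial]; exact hM

lemma dot_mulVec_symm {m : Type*} [Fintype m] {M : Matrix m m ℝ} (hM : Mᵀ = M)
    (a b : m → ℝ) : a ⬝ᵥ M *ᵥ b = (M *ᵥ a) ⬝ᵥ b := by
  rw [Matrix.dotProduct_mulVec]
  congr 1
  rw [← hM, Matrix.mulVec_transpose, hM]


/-- Cauchy–Schwarz for a PSD quadratic form. -/
lemma cs_psd {m : Type*} [Fintype m] {M : Matrix m m ℝ} (hM : M.PosSemidef)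
    (hMt : Mᵀ = M) (a b : m → ℝ) :
    (a ⬝ᵥ M *ᵥ b) ^ 2 ≤ (a ⬝ᵥ M *ᵥ a) * (b ⬝ᵥ M *ᵥ b) := by
  have hsym : b ⬝ᵥ M *ᵥ a = a ⬝ᵥ M *ᵥ b := by
    rw [Matrix.dotProduct_mulVec a M b]
    rw [show a ᵥ* M = M *ᵥ a by rw [← hMt, Matrix.mulVec_transpose, hMt]]
    exact (dotProduct_comm _ _).symm
  have key : ∀ t : ℝ, 0 ≤ (b ⬝ᵥ M *ᵥ b) * (t * t) + (2 * (a ⬝ᵥ M *ᵥ b)) * t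
      + (a ⬝ᵥ M *ᵥ a) := by
    intro t
    have h0 : 0 ≤ (t • b + a) ⬝ᵥ M *ᵥ (t • b + a) := by
      simpa using hM.dotProduct_mulVec_nonneg (t • b + a)
    simp only [Matrix.mulVec_add, Matrix.mulVec_smul, dotProduct_add, add_dotProduct,
      dotProduct_smul, smul_dotProduct, smul_eq_mul] at h0
    rw [hsym] at h0
    nlinarith [h0]
  have hd := discrim_le_zero key
  rw [discrim] at hd
  nlinarith [hd]


section Main

variable (P₁ P₂ : Matrix (Fin d) (Fin d) ℝ) (S : Matrix (Fin d ⊕ Fin d) (Fin d ⊕ Fin d) ℝ)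

lemma Dm_transpose (h1 : P₁ᵀ = P₁) (h2 : P₂ᵀ = P₂) : (Dm P₁ P₂)ᵀ = Dm P₁ P₂ := by
  rw [Dm, Matrix.fromBlocks_transpose]; simp [h1, h2]

lemma Em_transpose (ω : ℝ) : (Em d ω)ᵀ = Em d ω := by
  rw [Em, Matrix.fromBlocks_transpose]; simp

lemma Em_comm_Dm (ω : ℝ) : Em d ω * Dm P₁ P₂ = Dm P₁ P₂ * Em d ω := by
  rw [Em, Dm, Matrix.fromBlocks_multiply, Matrix.fromBlocks_multiply]
  simp [Matrix.smul_mul, Matrix.mul_smul]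

lemma Em_eq_affine (ω : ℝ) : Em d ω = Em d 0 + ω • Jm d := by
  ext (i | i) (j | j) <;>
    simp [Em, Jm, Matrix.fromBlocks, Matrix.one_apply, Matrix.add_apply,
      Matrix.smul_apply, Matrix.of_apply, mul_comm] <;> ring_nf <;>
    by_cases h : i = j <;> simp [h] <;> ring

lemma Gm_isUnit_det (hP₁ : P₁.PosDef) (hP₂ : P₂.PosDef) (hS : S.PosDef) {ω : ℝ}
    (hω : ω ∈ Set.Icc (0:ℝ) 1) : IsUnit (Gm P₁ P₂ S ω).det := by
  rw [isUnit_iff_ne_zero]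
  intro hdet
  obtain ⟨u, hu0, hGu⟩ := Matrix.exists_mulVec_eq_zero_iff.mpr hdet
  rw [Gm, Matrix.add_mulVec] at hGu
  rw [show (Em d ω * S) *ᵥ u = Em d ω *ᵥ (S *ᵥ u) from (Matrix.mulVec_mulVec ..).symm] at hGu
  set su := S *ᵥ u with hsu
  rw [Dm_mulVec, Em_mulVec] at hGu
  have eq1 : P₁ *ᵥ (u ∘ Sum.inl) + ω • (su ∘ Sum.inl) = 0 := by
    ext i; exact congrFun hGu (Sum.inl i)
  have eq2 : P₂ *ᵥ (u ∘ Sum.inr) + (1 - ω) • (su ∘ Sum.inr) = 0 := by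
    ext i; exact congrFun hGu (Sum.inr i)
  set u₁ := u ∘ Sum.inl
  set u₂ := u ∘ Sum.inr
  have e1 : u₁ ⬝ᵥ (P₁ *ᵥ u₁) + ω * (u₁ ⬝ᵥ (su ∘ Sum.inl)) = 0 := by
    have := congrArg (fun w => u₁ ⬝ᵥ w) eq1
    simpa [dotProduct_add, dotProduct_smul] using this
  have e2 : u₂ ⬝ᵥ (P₂ *ᵥ u₂) + (1 - ω) * (u₂ ⬝ᵥ (su ∘ Sum.inr)) = 0 := by
    have := congrArg (fun w => u₂ ⬝ᵥ w) eq2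
    simpa [dotProduct_add, dotProduct_smul] using this
  have hsplit : u ⬝ᵥ su = u₁ ⬝ᵥ (su ∘ Sum.inl) + u₂ ⬝ᵥ (su ∘ Sum.inr) := dot_split u su
  have ht1 : 0 ≤ u₁ ⬝ᵥ (P₁ *ᵥ u₁) := psd_quad hP₁.posSemidef u₁
  have ht2 : 0 ≤ u₂ ⬝ᵥ (P₂ *ᵥ u₂) := psd_quad hP₂.posSemidef u₂
  have ht3 : 0 ≤ u ⬝ᵥ su := psd_quad hS.posSemidef u
  have hω0 := hω.1
  have hω1 := hω.2
  rcases eq_or_lt_of_le hω0 with h0 | h0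
  · -- ω = 0
    have ht1z : u₁ ⬝ᵥ (P₁ *ᵥ u₁) = 0 := by rw [← h0] at e1; linarith [e1]
    have hu₁ : u₁ = 0 := pd_quad_zero hP₁ (le_of_eq ht1z)
    have ha : u₁ ⬝ᵥ (su ∘ Sum.inl) = 0 := by rw [hu₁, zero_dotProduct]
    have ht2z : u₂ ⬝ᵥ (P₂ *ᵥ u₂) = 0 := by
      rw [← h0] at e2; rw [ha] at hsplit; linarith
    have hu₂ : u₂ = 0 := pd_quad_zero hP₂ (le_of_eq ht2z)
    apply hu0
    ext (i | i)
    · exact congrFun hu₁ i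
    · exact congrFun hu₂ i
  · rcases eq_or_lt_of_le hω1 with h1 | h1
    · -- ω = 1
      have ht2z : u₂ ⬝ᵥ (P₂ *ᵥ u₂) = 0 := by rw [h1] at e2; simp at e2; linarith [e2]
      have hu₂ : u₂ = 0 := pd_quad_zero hP₂ (le_of_eq ht2z)
      have hb : u₂ ⬝ᵥ (su ∘ Sum.inr) = 0 := by rw [hu₂, zero_dotProduct]
      have ht1z : u₁ ⬝ᵥ (P₁ *ᵥ u₁) = 0 := by
        rw [h1] at e1; rw [hb] at hsplit; linarith
      have hu₁ : u₁ = 0 := pd_quad_zero hP₁ (le_of_eq ht1z)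
      apply hu0
      ext (i | i)
      · exact congrFun hu₁ i
      · exact congrFun hu₂ i
    · -- 0 < ω < 1
      have key : (1 - ω) * (u₁ ⬝ᵥ (P₁ *ᵥ u₁)) + ω * (u₂ ⬝ᵥ (P₂ *ᵥ u₂))
          + ω * (1 - ω) * (u ⬝ᵥ su) = 0 := by
        rw [hsplit]; nlinarith [e1, e2]
      have hpos : 0 < ω * (1 - ω) := mul_pos h0 (sub_pos.mpr h1)
      have h5 : ω * (1 - ω) * (u ⬝ᵥ su) ≤ 0 := by
        nlinarith [mul_nonneg (le_of_lt (sub_pos.mpr h1)) ht1,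
          mul_nonneg (le_of_lt h0) ht2]
      have ht3z : u ⬝ᵥ su = 0 := by
        refine le_antisymm ?_ ht3
        by_contra hc
        push_neg at hc
        nlinarith [mul_pos hpos hc]
      exact hu0 (pd_quad_zero hS (le_of_eq ht3z))

lemma Dm_isUnit_det (hP₁ : P₁.PosDef) (hP₂ : P₂.PosDef) : IsUnit (Dm P₁ P₂).det := by
  rw [Dm, Matrix.det_fromBlocks_zero₂₁]
  exact (hP₁.det_pos.ne'.isUnit).mul (hP₂.det_pos.ne'.isUnit)

lemma Gm_transpose (h1 : P₁ᵀ = P₁) (h2 : P₂ᵀ = P₂) (hSt : Sᵀ = S) (ω : ℝ) :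
    (Gm P₁ P₂ S ω)ᵀ = Dm P₁ P₂ + S * Em d ω := by
  rw [Gm, Matrix.transpose_add, Matrix.transpose_mul, Em_transpose, hSt,
    Dm_transpose _ _ h1 h2]

lemma Em_mul_Gm_transpose (h1 : P₁ᵀ = P₁) (h2 : P₂ᵀ = P₂) (hSt : Sᵀ = S) (ω : ℝ) :
    Em d ω * (Gm P₁ P₂ S ω)ᵀ = Gm P₁ P₂ S ω * Em d ω := by
  rw [Gm_transpose _ _ _ h1 h2 hSt, Gm, mul_add, add_mul, Em_comm_Dm,
    ← Matrix.mul_assoc, Matrix.mul_assoc]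

lemma Gm_mul_Fm (ω : ℝ) (hG : IsUnit (Gm P₁ P₂ S ω).det) :
    Gm P₁ P₂ S ω * Fm P₁ P₂ S ω = Em d ω := by
  rw [Fm, ← Matrix.mul_assoc, Matrix.mul_nonsing_inv _ hG, one_mul]

lemma Fm_symm (h1 : P₁ᵀ = P₁) (h2 : P₂ᵀ = P₂) (hSt : Sᵀ = S) (ω : ℝ)
    (hG : IsUnit (Gm P₁ P₂ S ω).det) : (Fm P₁ P₂ S ω)ᵀ = Fm P₁ P₂ S ω := by
  have hGT : IsUnit ((Gm P₁ P₂ S ω)ᵀ).det := by rwa [Matrix.det_transpose]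
  rw [Fm, Matrix.transpose_mul, Matrix.transpose_nonsing_inv, Em_transpose]
  have key : Gm P₁ P₂ S ω * (Em d ω * ((Gm P₁ P₂ S ω)ᵀ)⁻¹) = Em d ω := by
    rw [← Matrix.mul_assoc, ← Em_mul_Gm_transpose _ _ _ h1 h2 hSt, Matrix.mul_assoc,
      Matrix.mul_nonsing_inv _ hGT, mul_one]
  calc Em d ω * ((Gm P₁ P₂ S ω)ᵀ)⁻¹
      = (Gm P₁ P₂ S ω)⁻¹ * (Gm P₁ P₂ S ω * (Em d ω * ((Gm P₁ P₂ S ω)ᵀ)⁻¹)) := by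
        rw [← Matrix.mul_assoc, Matrix.nonsing_inv_mul _ hG, one_mul]
    _ = (Gm P₁ P₂ S ω)⁻¹ * Em d ω := by rw [key]

lemma Gm_inv_eq (ω : ℝ) (hG : IsUnit (Gm P₁ P₂ S ω).det) (hD : IsUnit (Dm P₁ P₂).det) :
    (Gm P₁ P₂ S ω)⁻¹ = (Dm P₁ P₂)⁻¹ - Fm P₁ P₂ S ω * S * (Dm P₁ P₂)⁻¹ := by
  apply Matrix.inv_eq_right_inv
  have h3 : Gm P₁ P₂ S ω * (Fm P₁ P₂ S ω * S * (Dm P₁ P₂)⁻¹)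
      = Em d ω * S * (Dm P₁ P₂)⁻¹ := by
    rw [← Matrix.mul_assoc, ← Matrix.mul_assoc, Gm_mul_Fm _ _ _ _ hG]
  rw [mul_sub, h3, ← sub_mul]
  have h4 : Gm P₁ P₂ S ω - Em d ω * S = Dm P₁ P₂ := by rw [Gm]; abel
  rw [h4, Matrix.mul_nonsing_inv _ hD]

lemma rel_DEr (ω : ℝ) (hG : IsUnit (Gm P₁ P₂ S ω).det) (v : (Fin d ⊕ Fin d) → ℝ) :
    Dm P₁ P₂ *ᵥ (Fm P₁ P₂ S ω *ᵥ v)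
      = Em d ω *ᵥ (v - S *ᵥ (Fm P₁ P₂ S ω *ᵥ v)) := by
  set u := Fm P₁ P₂ S ω *ᵥ v with hu
  have hGu : Gm P₁ P₂ S ω *ᵥ u = Em d ω *ᵥ v := by
    rw [hu, Matrix.mulVec_mulVec, Gm_mul_Fm _ _ _ _ hG]
  have : Dm P₁ P₂ *ᵥ u = Gm P₁ P₂ S ω *ᵥ u - Em d ω *ᵥ (S *ᵥ u) := by
    rw [Gm, Matrix.add_mulVec,
      show (Em d ω * S) *ᵥ u = Em d ω *ᵥ (S *ᵥ u) from (Matrix.mulVec_mulVec ..).symm]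
    abel
  rw [this, hGu, ← Matrix.mulVec_sub]

lemma isHerm_of_transpose {m : Type*} {M : Matrix m m ℝ} (h : Mᵀ = M) :
    M.IsHermitian := by
  rwa [Matrix.IsHermitian, Matrix.conjTranspose_eq_transpose_of_trivial]

lemma toBlocks22_posDef (hS : S.PosDef) : S.toBlocks₂₂.PosDef := by
  refine Matrix.PosDef.of_dotProduct_mulVec_pos ?_ ?_
  · apply isHerm_of_transpose
    have hSt := herm_transpose hS.1
    ext i j
    simp only [Matrix.transpose_apply, Matrix.toBlocks₂₂, Matrix.of_apply]
    exact (congrFun (congrFun hSt (Sum.inr j)) (Sum.inr i)).symm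
  · intro y hy
    have hy' : (Sum.elim 0 y : (Fin d ⊕ Fin d) → ℝ) ≠ 0 := by
      intro h
      exact hy ((sum_elim_eq_zero h).2)
    have := hS.dotProduct_mulVec_pos hy'
    simp only [star_trivial] at this ⊢
    convert this using 1
    conv_rhs => rw [← Matrix.fromBlocks_toBlocks S, Matrix.fromBlocks_mulVec]
    simp [dot_split]

lemma toBlocks11_posDef (hS : S.PosDef) : S.toBlocks₁₁.PosDef := by
  refine Matrix.PosDef.of_dotProduct_mulVec_pos ?_ ?_
  · apply isHerm_of_transpose
    have hSt := herm_transpose hS.1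
    ext i j
    simp only [Matrix.transpose_apply, Matrix.toBlocks₁₁, Matrix.of_apply]
    exact (congrFun (congrFun hSt (Sum.inl j)) (Sum.inl i)).symm
  · intro y hy
    have hy' : (Sum.elim y 0 : (Fin d ⊕ Fin d) → ℝ) ≠ 0 := by
      intro h
      exact hy ((sum_elim_eq_zero h).1)
    have := hS.dotProduct_mulVec_pos hy'
    simp only [star_trivial] at this ⊢
    convert this using 1
    conv_rhs => rw [← Matrix.fromBlocks_toBlocks S, Matrix.fromBlocks_mulVec]
    simp [dot_split]

lemma Gm_zero : Gm P₁ P₂ S 0 = Matrix.fromBlocks P₁ 0 S.toBlocks₂₁ (P₂ + S.toBlocks₂₂) := by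
  rw [Gm, Dm, Em]
  conv_lhs => rw [← Matrix.fromBlocks_toBlocks S]
  rw [Matrix.fromBlocks_multiply, Matrix.fromBlocks_add, Matrix.fromBlocks_inj]
  norm_num

lemma Gm_one : Gm P₁ P₂ S 1 = Matrix.fromBlocks (P₁ + S.toBlocks₁₁) S.toBlocks₁₂ 0 P₂ := by
  rw [Gm, Dm, Em]
  conv_lhs => rw [← Matrix.fromBlocks_toBlocks S]
  rw [Matrix.fromBlocks_multiply, Matrix.fromBlocks_add, Matrix.fromBlocks_inj]
  norm_num

lemma Fm_zero (hP₁ : P₁.PosDef) (hP₂ : P₂.PosDef) (hS : S.PosDef) :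
    Fm P₁ P₂ S 0 = Matrix.fromBlocks 0 0 0 (P₂ + S.toBlocks₂₂)⁻¹ := by
  have hG := Gm_isUnit_det P₁ P₂ S hP₁ hP₂ hS (show (0:ℝ) ∈ Set.Icc (0:ℝ) 1 by constructor <;> norm_num)
  have hPS : (P₂ + S.toBlocks₂₂).PosDef := hP₂.add_posSemidef (toBlocks22_posDef S hS).posSemidef
  have hPSd : IsUnit (P₂ + S.toBlocks₂₂).det := hPS.det_pos.ne'.isUnit
  have hkey : Gm P₁ P₂ S 0 * Matrix.fromBlocks 0 0 0 (P₂ + S.toBlocks₂₂)⁻¹ = Em d 0 := by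
    rw [Gm_zero, Matrix.fromBlocks_multiply, Em]
    simp [Matrix.mul_nonsing_inv _ hPSd]
  rw [Fm, ← hkey, ← Matrix.mul_assoc, Matrix.nonsing_inv_mul _ hG, one_mul]

lemma Fm_one (hP₁ : P₁.PosDef) (hP₂ : P₂.PosDef) (hS : S.PosDef) :
    Fm P₁ P₂ S 1 = Matrix.fromBlocks (P₁ + S.toBlocks₁₁)⁻¹ 0 0 0 := by
  have hG := Gm_isUnit_det P₁ P₂ S hP₁ hP₂ hS (show (1:ℝ) ∈ Set.Icc (0:ℝ) 1 by constructor <;> norm_num)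
  have hPS : (P₁ + S.toBlocks₁₁).PosDef := hP₁.add_posSemidef (toBlocks11_posDef S hS).posSemidef
  have hPSd : IsUnit (P₁ + S.toBlocks₁₁).det := hPS.det_pos.ne'.isUnit
  have hkey : Gm P₁ P₂ S 1 * Matrix.fromBlocks (P₁ + S.toBlocks₁₁)⁻¹ 0 0 0 = Em d 1 := by
    rw [Gm_one, Matrix.fromBlocks_multiply, Em]
    simp [Matrix.mul_nonsing_inv _ hPSd]
  rw [Fm, ← hkey, ← Matrix.mul_assoc, Matrix.nonsing_inv_mul _ hG, one_mul]

lemma Em_isUnit_det {ω : ℝ} (hω0 : ω ≠ 0) (hω1 : ω ≠ 1) : IsUnit (Em d ω).det := by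
  rw [Em, Matrix.det_fromBlocks_zero₂₁, isUnit_iff_ne_zero]
  have h1 : (1:ℝ) - ω ≠ 0 := sub_ne_zero.mpr (Ne.symm hω1)
  simp [Matrix.det_smul, pow_ne_zero, hω0, h1]

lemma Bc_posDef (hP₁ : P₁.PosDef) (hP₂ : P₂.PosDef) (hS : S.PosDef) {ω : ℝ}
    (h0 : 0 < ω) (h1 : ω < 1) : (Bc d P₁ P₂ S ω).PosDef := by
  have hω1 : (0:ℝ) < 1 - ω := by linarith
  refine Matrix.PosDef.posSemidef_add ?_ hS
  refine Matrix.PosSemidef.of_dotProduct_mulVec_nonneg ?_ ?_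
  · apply isHerm_of_transpose
    rw [Matrix.fromBlocks_transpose]
    simp [Matrix.transpose_smul, herm_transpose hP₁.1, herm_transpose hP₂.1]
  · intro y
    have hmv : (Matrix.fromBlocks (ω⁻¹ • P₁) 0 0 ((1 - ω)⁻¹ • P₂)) *ᵥ y
        = Sum.elim (ω⁻¹ • (P₁ *ᵥ (y ∘ Sum.inl))) ((1 - ω)⁻¹ • (P₂ *ᵥ (y ∘ Sum.inr))) := by
      rw [mulVec_blocks]; simp [Matrix.smul_mulVec]
    rw [star_trivial, hmv, dot_split]
    simp only [Sum.elim_comp_inl, Sum.elim_comp_inr, dotProduct_smul, smul_eq_mul]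
    have q1 := psd_quad hP₁.posSemidef (y ∘ Sum.inl)
    have q2 := psd_quad hP₂.posSemidef (y ∘ Sum.inr)
    have := inv_nonneg.mpr (le_of_lt h0)
    have := inv_nonneg.mpr (le_of_lt hω1)
    positivity

lemma Fm_interior (hP₁ : P₁.PosDef) (hP₂ : P₂.PosDef) (hS : S.PosDef) {ω : ℝ}
    (h0 : 0 < ω) (h1 : ω < 1) : Fm P₁ P₂ S ω = (Bc d P₁ P₂ S ω)⁻¹ := by
  have hω0 : ω ≠ 0 := ne_of_gt h0
  have hω1 : ω ≠ 1 := ne_of_lt h1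
  have hE := Em_isUnit_det (d := d) hω0 hω1
  have hEB : Gm P₁ P₂ S ω = Em d ω * Bc d P₁ P₂ S ω := by
    rw [Gm, Bc, mul_add, Em, Dm, Matrix.fromBlocks_multiply]
    congr 2 <;> simp [Matrix.smul_mul, Matrix.mul_smul, smul_smul,
      mul_inv_cancel₀ hω0, mul_inv_cancel₀ (sub_ne_zero.mpr (Ne.symm hω1)),
      inv_mul_cancel₀ hω0, inv_mul_cancel₀ (sub_ne_zero.mpr (Ne.symm hω1))]
  rw [Fm, hEB, Matrix.mul_inv_rev, Matrix.mul_assoc, Matrix.nonsing_inv_mul _ hE, mul_one]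

lemma Hmat_mulVec (x : Fin d → ℝ) : Hmat d *ᵥ x = Sum.elim x x := by
  rw [Hmat, Matrix.fromRows_mulVec]
  simp

lemma conj_dot (M : Matrix (Fin d ⊕ Fin d) (Fin d ⊕ Fin d) ℝ) (x : Fin d → ℝ) :
    x ⬝ᵥ ((Hmat d)ᵀ * M * Hmat d) *ᵥ x = Sum.elim x x ⬝ᵥ (M *ᵥ Sum.elim x x) := by
  have hv := Hmat_mulVec x
  calc x ⬝ᵥ ((Hmat d)ᵀ * M * Hmat d) *ᵥ x
      = x ⬝ᵥ ((Hmat d)ᵀ *ᵥ ((M * Hmat d) *ᵥ x)) := by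
        rw [Matrix.mul_assoc, ← Matrix.mulVec_mulVec]
    _ = x ⬝ᵥ (((M * Hmat d) *ᵥ x) ᵥ* Hmat d) := by rw [Matrix.mulVec_transpose]
    _ = (((M * Hmat d) *ᵥ x) ᵥ* Hmat d) ⬝ᵥ x := dotProduct_comm _ _
    _ = ((M * Hmat d) *ᵥ x) ⬝ᵥ (Hmat d *ᵥ x) := by rw [← Matrix.dotProduct_mulVec]
    _ = (M *ᵥ (Hmat d *ᵥ x)) ⬝ᵥ (Hmat d *ᵥ x) := by rw [Matrix.mulVec_mulVec]
    _ = Sum.elim x x ⬝ᵥ (M *ᵥ Sum.elim x x) := by rw [hv, dotProduct_comm]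

def htil (P₁ P₂ : Matrix (Fin d) (Fin d) ℝ)
    (S : Matrix (Fin d ⊕ Fin d) (Fin d ⊕ Fin d) ℝ) (x : Fin d → ℝ) (ω : ℝ) : ℝ :=
  Sum.elim x x ⬝ᵥ (Fm P₁ P₂ S ω *ᵥ Sum.elim x x)

lemma hfun_eq_htil (hP₁ : P₁.PosDef) (hP₂ : P₂.PosDef) (hS : S.PosDef) (x : Fin d → ℝ)
    {ω : ℝ} (hω : ω ∈ Set.Icc (0:ℝ) 1) :
    hfun d P₁ P₂ S x ω = htil P₁ P₂ S x ω := by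
  by_cases h0 : ω = 0
  · subst h0
    rw [hfun, AF, if_pos rfl, htil, Fm_zero _ _ _ hP₁ hP₂ hS, mulVec_blocks, dot_split]
    simp
  · by_cases h1 : ω = 1
    · subst h1
      rw [hfun, AF, if_neg h0, if_pos rfl, htil, Fm_one _ _ _ hP₁ hP₂ hS,
        mulVec_blocks, dot_split]
      simp
    · have h0' : 0 < ω := lt_of_le_of_ne hω.1 (Ne.symm h0)
      have h1' : ω < 1 := lt_of_le_of_ne hω.2 h1
      rw [hfun, AF, if_neg h0, if_neg h1, conj_dot, htil,
        Fm_interior _ _ _ hP₁ hP₂ hS h0' h1']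

def rv (x : Fin d → ℝ) (ω : ℝ) : (Fin d ⊕ Fin d) → ℝ :=
  Sum.elim x x - S *ᵥ (Fm P₁ P₂ S ω *ᵥ Sum.elim x x)

def s1 (x : Fin d → ℝ) (ω : ℝ) : ℝ :=
  (rv P₁ P₂ S x ω ∘ Sum.inl) ⬝ᵥ (P₁⁻¹ *ᵥ (rv P₁ P₂ S x ω ∘ Sum.inl))

def s2 (x : Fin d → ℝ) (ω : ℝ) : ℝ :=
  (rv P₁ P₂ S x ω ∘ Sum.inr) ⬝ᵥ (P₂⁻¹ *ᵥ (rv P₁ P₂ S x ω ∘ Sum.inr))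

lemma Kr_eq (hP₁ : P₁.PosDef) (hP₂ : P₂.PosDef) (x : Fin d → ℝ) (ω : ℝ) :
    ((Dm P₁ P₂)⁻¹ * Jm d) *ᵥ rv P₁ P₂ S x ω
      = Sum.elim (P₁⁻¹ *ᵥ (rv P₁ P₂ S x ω ∘ Sum.inl))
          (-(P₂⁻¹ *ᵥ (rv P₁ P₂ S x ω ∘ Sum.inr))) := by
  set r := rv P₁ P₂ S x ω
  set w := Sum.elim (P₁⁻¹ *ᵥ (r ∘ Sum.inl)) (-(P₂⁻¹ *ᵥ (r ∘ Sum.inr))) with hw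
  have h₁ : IsUnit P₁.det := hP₁.det_pos.ne'.isUnit
  have h₂ : IsUnit P₂.det := hP₂.det_pos.ne'.isUnit
  have hD : IsUnit (Dm P₁ P₂).det := Dm_isUnit_det P₁ P₂ hP₁ hP₂
  have hDw : Dm P₁ P₂ *ᵥ w = Jm d *ᵥ r := by
    rw [Dm_mulVec, Jm_mulVec]
    have hwl : P₁ *ᵥ (w ∘ Sum.inl) = r ∘ Sum.inl := by
      rw [show w ∘ Sum.inl = P₁⁻¹ *ᵥ (r ∘ Sum.inl) from rfl, Matrix.mulVec_mulVec,
        Matrix.mul_nonsing_inv _ h₁, Matrix.one_mulVec]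
    have hwr : P₂ *ᵥ (w ∘ Sum.inr) = -(r ∘ Sum.inr) := by
      rw [show w ∘ Sum.inr = -(P₂⁻¹ *ᵥ (r ∘ Sum.inr)) from rfl, Matrix.mulVec_neg,
        Matrix.mulVec_mulVec, Matrix.mul_nonsing_inv _ h₂, Matrix.one_mulVec]
    rw [hwl, hwr]
  calc ((Dm P₁ P₂)⁻¹ * Jm d) *ᵥ r = (Dm P₁ P₂)⁻¹ *ᵥ (Jm d *ᵥ r) :=
        (Matrix.mulVec_mulVec ..).symm
    _ = (Dm P₁ P₂)⁻¹ *ᵥ (Dm P₁ P₂ *ᵥ w) := by rw [hDw]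
    _ = w := by
        rw [Matrix.mulVec_mulVec, Matrix.nonsing_inv_mul _ hD, Matrix.one_mulVec]

lemma rKr_eq (hP₁ : P₁.PosDef) (hP₂ : P₂.PosDef) (x : Fin d → ℝ) (ω : ℝ) :
    rv P₁ P₂ S x ω ⬝ᵥ (((Dm P₁ P₂)⁻¹ * Jm d) *ᵥ rv P₁ P₂ S x ω)
      = s1 P₁ P₂ S x ω - s2 P₁ P₂ S x ω := by
  rw [Kr_eq _ _ _ hP₁ hP₂, dot_split, s1, s2]
  simp [dotProduct_neg, sub_eq_add_neg]

attribute [local instance] Matrix.linftyOpNormedAddCommGroup Matrix.linftyOpNormedRing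
  Matrix.linftyOpNormedAlgebra

def quadCLM (v : (Fin d ⊕ Fin d) → ℝ) : Matrix (Fin d ⊕ Fin d) (Fin d ⊕ Fin d) ℝ →L[ℝ] ℝ :=
  LinearMap.toContinuousLinearMap
  { toFun := fun M => v ⬝ᵥ (M *ᵥ v)
    map_add' := by
      intro M N
      simp [Matrix.add_mulVec, dotProduct_add]
    map_smul' := by
      intro c M
      simp [Matrix.smul_mulVec, dotProduct_smul] }

@[simp] lemma quadCLM_apply (v : (Fin d ⊕ Fin d) → ℝ)
    (M : Matrix (Fin d ⊕ Fin d) (Fin d ⊕ Fin d) ℝ) :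
    quadCLM v M = v ⬝ᵥ (M *ᵥ v) := rfl

lemma deriv_value (hP₁ : P₁.PosDef) (hP₂ : P₂.PosDef) (hS : S.PosDef) (x : Fin d → ℝ)
    {ω : ℝ} (hω : ω ∈ Set.Icc (0:ℝ) 1) :
    Sum.elim x x ⬝ᵥ ((-((Gm P₁ P₂ S ω)⁻¹ * (Jm d * S) * (Gm P₁ P₂ S ω)⁻¹) * Em d ω
        + (Gm P₁ P₂ S ω)⁻¹ * Jm d) *ᵥ Sum.elim x x)
      = s1 P₁ P₂ S x ω - s2 P₁ P₂ S x ω := by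
  have hSt : Sᵀ = S := herm_transpose hS.1
  have h1t : P₁ᵀ = P₁ := herm_transpose hP₁.1
  have h2t : P₂ᵀ = P₂ := herm_transpose hP₂.1
  have hG : IsUnit (Gm P₁ P₂ S ω).det := Gm_isUnit_det P₁ P₂ S hP₁ hP₂ hS hω
  have hD : IsUnit (Dm P₁ P₂).det := Dm_isUnit_det P₁ P₂ hP₁ hP₂
  have hFs : (Fm P₁ P₂ S ω)ᵀ = Fm P₁ P₂ S ω := Fm_symm P₁ P₂ S h1t h2t hSt ω hG
  set v : (Fin d ⊕ Fin d) → ℝ := Sum.elim x x with hv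
  set u := Fm P₁ P₂ S ω *ᵥ v with hu
  set r := rv P₁ P₂ S x ω with hr
  have hrdef : r = v - S *ᵥ u := rfl
  set Gi := (Gm P₁ P₂ S ω)⁻¹ with hGi
  set K := (Dm P₁ P₂)⁻¹ * Jm d with hK
  have step0 : -(Gi * (Jm d * S) * Gi) * Em d ω + Gi * Jm d
      = Gi * Jm d - (Gi * Jm d) * (S * Fm P₁ P₂ S ω) := by
    rw [Fm, hGi]
    noncomm_ring
  have step1 : (-(Gi * (Jm d * S) * Gi) * Em d ω + Gi * Jm d) *ᵥ v
      = (Gi * Jm d) *ᵥ r := by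
    rw [step0, Matrix.sub_mulVec, hrdef, Matrix.mulVec_sub]
    congr 1
    rw [hu]
    simp only [Matrix.mulVec_mulVec, Matrix.mul_assoc]
  have hMID : Gi = (Dm P₁ P₂)⁻¹ - Fm P₁ P₂ S ω * S * (Dm P₁ P₂)⁻¹ :=
    Gm_inv_eq P₁ P₂ S ω hG hD
  have step2m : Gi * Jm d = K - Fm P₁ P₂ S ω * (S * K) := by
    rw [hMID, hK]
    noncomm_ring
  rw [step1, step2m, Matrix.sub_mulVec]
  rw [show (Fm P₁ P₂ S ω * (S * K)) *ᵥ r = Fm P₁ P₂ S ω *ᵥ (S *ᵥ (K *ᵥ r)) by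
    simp only [Matrix.mulVec_mulVec, Matrix.mul_assoc]]
  rw [dotProduct_sub, dot_mulVec_symm hFs, ← hu, dot_mulVec_symm hSt, ← sub_dotProduct]
  rw [show v - S *ᵥ u = r from hrdef.symm]
  exact rKr_eq P₁ P₂ S hP₁ hP₂ x ω

lemma htil_hasDerivAt (hP₁ : P₁.PosDef) (hP₂ : P₂.PosDef) (hS : S.PosDef) (x : Fin d → ℝ)
    {ω₀ : ℝ} (hω₀ : ω₀ ∈ Set.Icc (0:ℝ) 1) :
    HasDerivAt (htil P₁ P₂ S x) (s1 P₁ P₂ S x ω₀ - s2 P₁ P₂ S x ω₀) ω₀ := by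
  have hG : IsUnit (Gm P₁ P₂ S ω₀).det := Gm_isUnit_det P₁ P₂ S hP₁ hP₂ hS hω₀
  have hGU : IsUnit (Gm P₁ P₂ S ω₀) := (Matrix.isUnit_iff_isUnit_det _).mpr hG
  have hGd : HasDerivAt (fun ω => Gm P₁ P₂ S ω) (Jm d * S) ω₀ := by
    have heq : (fun ω : ℝ => Gm P₁ P₂ S ω)
        = fun ω => (Dm P₁ P₂ + Em d 0 * S) + ω • (Jm d * S) := by
      funext ω
      rw [Gm, Em_eq_affine, add_mul, Matrix.smul_mul, add_assoc]
    rw [heq]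
    have h := ((hasDerivAt_id ω₀).smul_const (Jm d * S)).const_add (Dm P₁ P₂ + Em d 0 * S)
    rw [one_smul] at h
    exact h
  have hId : HasDerivAt (fun ω => (Gm P₁ P₂ S ω)⁻¹)
      (-((Gm P₁ P₂ S ω₀)⁻¹ * (Jm d * S) * (Gm P₁ P₂ S ω₀)⁻¹)) ω₀ := by
    obtain ⟨U, hU⟩ := hGU
    have h1 := (hasFDerivAt_ringInverse (𝕜 := ℝ) U)
    rw [hU] at h1
    have h2 := h1.comp_hasDerivAt ω₀ hGd
    have h3 : (fun ω => Ring.inverse (Gm P₁ P₂ S ω)) = fun ω => (Gm P₁ P₂ S ω)⁻¹ :=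
      funext fun ω => (Matrix.nonsing_inv_eq_ringInverse _).symm
    rw [← h3]
    have h4 := h2
    simp [Matrix.coe_units_inv, hU, Function.comp,
      ContinuousLinearMap.mulLeftRight_apply] at h4
    exact h4
  have hEd : HasDerivAt (fun ω => Em d ω) (Jm d) ω₀ := by
    have heq : (fun ω : ℝ => Em d ω) = fun ω => Em d 0 + ω • Jm d := by
      funext ω; exact Em_eq_affine ω
    rw [heq]
    have h := ((hasDerivAt_id ω₀).smul_const (Jm d)).const_add (Em d 0)
    rw [one_smul] at h
    exact h
  have hFd : HasDerivAt (fun ω => Fm P₁ P₂ S ω)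
      (-((Gm P₁ P₂ S ω₀)⁻¹ * (Jm d * S) * (Gm P₁ P₂ S ω₀)⁻¹) * Em d ω₀
        + (Gm P₁ P₂ S ω₀)⁻¹ * Jm d) ω₀ := hId.mul hEd
  have hcomp := ((quadCLM (Sum.elim x x)).hasFDerivAt).comp_hasDerivAt ω₀ hFd
  have : HasDerivAt (htil P₁ P₂ S x)
      (quadCLM (Sum.elim x x) (-((Gm P₁ P₂ S ω₀)⁻¹ * (Jm d * S) * (Gm P₁ P₂ S ω₀)⁻¹) * Em d ω₀
        + (Gm P₁ P₂ S ω₀)⁻¹ * Jm d)) ω₀ := hcomp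
  rwa [quadCLM_apply, deriv_value P₁ P₂ S hP₁ hP₂ hS x hω₀] at this

lemma stationary (hP₁ : P₁.PosDef) (hP₂ : P₂.PosDef) (hS : S.PosDef) (x : Fin d → ℝ)
    {ω : ℝ} (hω : ω ∈ Set.Icc (0:ℝ) 1)
    (hder : HasDerivWithinAt (hfun d P₁ P₂ S x) 0 (Set.Icc (0:ℝ) 1) ω) :
    s1 P₁ P₂ S x ω = s2 P₁ P₂ S x ω := by
  have hd1 := htil_hasDerivAt P₁ P₂ S hP₁ hP₂ hS x hω
  have heq : ∀ y ∈ Set.Icc (0:ℝ) 1, htil P₁ P₂ S x y = hfun d P₁ P₂ S x y :=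
    fun y hy => (hfun_eq_htil P₁ P₂ S hP₁ hP₂ hS x hy).symm
  have h2 : HasDerivWithinAt (htil P₁ P₂ S x) 0 (Set.Icc (0:ℝ) 1) ω :=
    hder.congr heq (heq ω hω)
  have h3 : HasDerivWithinAt (htil P₁ P₂ S x)
      (s1 P₁ P₂ S x ω - s2 P₁ P₂ S x ω) (Set.Icc (0:ℝ) 1) ω := hd1.hasDerivWithinAt
  have hu := uniqueDiffOn_Icc (zero_lt_one) ω hω
  have : s1 P₁ P₂ S x ω - s2 P₁ P₂ S x ω = 0 := by
    rw [← h3.derivWithin hu, h2.derivWithin hu]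
  linarith

lemma rel_blocks (hP₁ : P₁.PosDef) (hP₂ : P₂.PosDef) (hS : S.PosDef) (x : Fin d → ℝ)
    {ω : ℝ} (hω : ω ∈ Set.Icc (0:ℝ) 1) :
    (Fm P₁ P₂ S ω *ᵥ Sum.elim x x) ∘ Sum.inl
        = ω • (P₁⁻¹ *ᵥ (rv P₁ P₂ S x ω ∘ Sum.inl))
      ∧ (Fm P₁ P₂ S ω *ᵥ Sum.elim x x) ∘ Sum.inr
        = (1 - ω) • (P₂⁻¹ *ᵥ (rv P₁ P₂ S x ω ∘ Sum.inr)) := by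
  have hG := Gm_isUnit_det P₁ P₂ S hP₁ hP₂ hS hω
  have h₁ : IsUnit P₁.det := hP₁.det_pos.ne'.isUnit
  have h₂ : IsUnit P₂.det := hP₂.det_pos.ne'.isUnit
  have hrel := rel_DEr P₁ P₂ S ω hG (Sum.elim x x)
  rw [Dm_mulVec, show Sum.elim x x - S *ᵥ (Fm P₁ P₂ S ω *ᵥ Sum.elim x x)
    = rv P₁ P₂ S x ω from rfl, Em_mulVec] at hrel
  set u := Fm P₁ P₂ S ω *ᵥ Sum.elim x x
  set r := rv P₁ P₂ S x ω
  have e1 : P₁ *ᵥ (u ∘ Sum.inl) = ω • (r ∘ Sum.inl) := by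
    ext i; exact congrFun hrel (Sum.inl i)
  have e2 : P₂ *ᵥ (u ∘ Sum.inr) = (1 - ω) • (r ∘ Sum.inr) := by
    ext i; exact congrFun hrel (Sum.inr i)
  constructor
  · calc u ∘ Sum.inl = P₁⁻¹ *ᵥ (P₁ *ᵥ (u ∘ Sum.inl)) := by
          rw [Matrix.mulVec_mulVec, Matrix.nonsing_inv_mul _ h₁, Matrix.one_mulVec]
      _ = ω • (P₁⁻¹ *ᵥ (r ∘ Sum.inl)) := by rw [e1, Matrix.mulVec_smul]
  · calc u ∘ Sum.inr = P₂⁻¹ *ᵥ (P₂ *ᵥ (u ∘ Sum.inr)) := by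
          rw [Matrix.mulVec_mulVec, Matrix.nonsing_inv_mul _ h₂, Matrix.one_mulVec]
      _ = (1 - ω) • (P₂⁻¹ *ᵥ (r ∘ Sum.inr)) := by rw [e2, Matrix.mulVec_smul]

lemma rv_ne_zero (hP₁ : P₁.PosDef) (hP₂ : P₂.PosDef) (hS : S.PosDef) (x : Fin d → ℝ)
    (hx : x ≠ 0) {ω : ℝ} (hω : ω ∈ Set.Icc (0:ℝ) 1) : rv P₁ P₂ S x ω ≠ 0 := by
  intro h
  have hG := Gm_isUnit_det P₁ P₂ S hP₁ hP₂ hS hω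
  have hD : IsUnit (Dm P₁ P₂).det := Dm_isUnit_det P₁ P₂ hP₁ hP₂
  have hrel := rel_DEr P₁ P₂ S ω hG (Sum.elim x x)
  rw [show Sum.elim x x - S *ᵥ (Fm P₁ P₂ S ω *ᵥ Sum.elim x x)
    = rv P₁ P₂ S x ω from rfl, h, Matrix.mulVec_zero] at hrel
  have hu0 : Fm P₁ P₂ S ω *ᵥ Sum.elim x x = 0 := by
    calc Fm P₁ P₂ S ω *ᵥ Sum.elim x x
        = (Dm P₁ P₂)⁻¹ *ᵥ (Dm P₁ P₂ *ᵥ (Fm P₁ P₂ S ω *ᵥ Sum.elim x x)) := by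
          rw [Matrix.mulVec_mulVec, Matrix.nonsing_inv_mul _ hD, Matrix.one_mulVec]
      _ = 0 := by rw [hrel, Matrix.mulVec_zero]
  have hv0 : (Sum.elim x x : (Fin d ⊕ Fin d) → ℝ) = 0 := by
    have := h
    rw [rv, hu0, Matrix.mulVec_zero, sub_zero] at this
    exact this
  exact hx (sum_elim_eq_zero hv0).1

lemma s1_nonneg (hP₁ : P₁.PosDef) (x : Fin d → ℝ) (ω : ℝ) : 0 ≤ s1 P₁ P₂ S x ω :=
  psd_quad hP₁.inv.posSemidef _

lemma s2_nonneg (hP₂ : P₂.PosDef) (x : Fin d → ℝ) (ω : ℝ) : 0 ≤ s2 P₁ P₂ S x ω :=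
  psd_quad hP₂.inv.posSemidef _

lemma quad_blocks (Q : Matrix (Fin d ⊕ Fin d) (Fin d ⊕ Fin d) ℝ) (hQt : Qᵀ = Q)
    (a b : Fin d → ℝ) :
    Sum.elim a b ⬝ᵥ (Q *ᵥ Sum.elim a b)
      = a ⬝ᵥ (Q.toBlocks₁₁ *ᵥ a) + 2*(a ⬝ᵥ (Q.toBlocks₁₂ *ᵥ b))
        + b ⬝ᵥ (Q.toBlocks₂₂ *ᵥ b) := by
  have h21 : Q.toBlocks₂₁ = (Q.toBlocks₁₂)ᵀ := by
    ext i j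
    simp only [Matrix.toBlocks₂₁, Matrix.toBlocks₁₂, Matrix.transpose_apply, Matrix.of_apply]
    exact (congrFun (congrFun hQt (Sum.inr i)) (Sum.inl j)).symm
  conv_lhs => rw [← Matrix.fromBlocks_toBlocks Q, Matrix.fromBlocks_mulVec, dot_split]
  simp only [Sum.elim_comp_inl, Sum.elim_comp_inr, dotProduct_add]
  have hcross : b ⬝ᵥ (Q.toBlocks₂₁ *ᵥ a) = a ⬝ᵥ (Q.toBlocks₁₂ *ᵥ b) := by
    rw [h21, dotProduct_comm, Matrix.mulVec_transpose, ← Matrix.dotProduct_mulVec]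
  rw [hcross]
  ring

lemma lower_bound (hP₁ : P₁.PosDef) (hP₂ : P₂.PosDef) (hS : S.PosDef) (x : Fin d → ℝ)
    {ω : ℝ} (hω : ω ∈ Set.Icc (0:ℝ) 1)
    {P : Matrix (Fin d ⊕ Fin d) (Fin d ⊕ Fin d) ℝ} (hP : P ∈ Adm d P₁ P₂ S) :
    htil P₁ P₂ S x ω ≤ x ⬝ᵥ ((Hmat d)ᵀ * P⁻¹ * Hmat d) *ᵥ x
    ∧ (x ⬝ᵥ ((Hmat d)ᵀ * P⁻¹ * Hmat d) *ᵥ x = htil P₁ P₂ S x ω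
        → P *ᵥ (Fm P₁ P₂ S ω *ᵥ Sum.elim x x) = Sum.elim x x) := by
  obtain ⟨Q, hQpsd, hQ11, hQ22, rfl⟩ := hP
  have hPd : (Q + S).PosDef := Matrix.PosDef.posSemidef_add hQpsd hS
  have hPt : (Q + S)ᵀ = Q + S := herm_transpose hPd.1
  have hQt : Qᵀ = Q := herm_transpose hQpsd.1
  have hPdet : IsUnit (Q + S).det := hPd.det_pos.ne'.isUnit
  set v : (Fin d ⊕ Fin d) → ℝ := Sum.elim x x with hvdef
  set u := Fm P₁ P₂ S ω *ᵥ v with hu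
  set r := rv P₁ P₂ S x ω with hr
  have hrdef : r = v - S *ᵥ u := rfl
  set σ1 := s1 P₁ P₂ S x ω
  set σ2 := s2 P₁ P₂ S x ω
  obtain ⟨hu1, hu2⟩ := rel_blocks P₁ P₂ S hP₁ hP₂ hS x hω
  rw [← hu, ← hr] at hu1 hu2
  -- u ⬝ᵥ r = ω σ1 + (1-ω) σ2
  have hur : u ⬝ᵥ r = ω * σ1 + (1 - ω) * σ2 := by
    rw [dot_split, hu1, hu2, smul_dotProduct, smul_dotProduct]
    have e1 : (P₁⁻¹ *ᵥ (r ∘ Sum.inl)) ⬝ᵥ (r ∘ Sum.inl) = σ1 := dotProduct_comm _ _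
    have e2 : (P₂⁻¹ *ᵥ (r ∘ Sum.inr)) ⬝ᵥ (r ∘ Sum.inr) = σ2 := dotProduct_comm _ _
    rw [smul_eq_mul, smul_eq_mul, e1, e2]
  -- bound on u ⬝ᵥ Q u
  have hα : (u ∘ Sum.inl) ⬝ᵥ (P₁ *ᵥ (u ∘ Sum.inl)) = ω^2 * σ1 := by
    rw [hu1, smul_dotProduct, Matrix.mulVec_smul, dotProduct_smul]
    have : (P₁⁻¹ *ᵥ (r ∘ Sum.inl)) ⬝ᵥ (P₁ *ᵥ (P₁⁻¹ *ᵥ (r ∘ Sum.inl))) = σ1 := by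
      rw [Matrix.mulVec_mulVec, Matrix.mul_nonsing_inv _ hP₁.det_pos.ne'.isUnit,
        Matrix.one_mulVec]
      exact dotProduct_comm _ _
    rw [smul_eq_mul, smul_eq_mul, this]
    ring
  have hβ : (u ∘ Sum.inr) ⬝ᵥ (P₂ *ᵥ (u ∘ Sum.inr)) = (1-ω)^2 * σ2 := by
    rw [hu2, smul_dotProduct, Matrix.mulVec_smul, dotProduct_smul]
    have : (P₂⁻¹ *ᵥ (r ∘ Sum.inr)) ⬝ᵥ (P₂ *ᵥ (P₂⁻¹ *ᵥ (r ∘ Sum.inr))) = σ2 := by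
      rw [Matrix.mulVec_mulVec, Matrix.mul_nonsing_inv _ hP₂.det_pos.ne'.isUnit,
        Matrix.one_mulVec]
      exact dotProduct_comm _ _
    rw [smul_eq_mul, smul_eq_mul, this]
    ring
  set cc := (u ∘ Sum.inl) ⬝ᵥ (Q.toBlocks₁₂ *ᵥ (u ∘ Sum.inr)) with hcc
  have hQu : u ⬝ᵥ (Q *ᵥ u) = ω^2*σ1 + 2*cc + (1-ω)^2*σ2 := by
    conv_lhs => rw [← Sum.elim_comp_inl_inr u]
    rw [quad_blocks Q hQt, hQ11, hQ22, hα, hβ]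
  have hQuB : u ⬝ᵥ (Q *ᵥ u) ≤ ω * σ1 + (1 - ω) * σ2 := by
    rcases eq_or_lt_of_le hω.1 with h0 | h0
    · -- ω = 0
      have hcc0 : cc = 0 := by
        rw [hcc, hu1, ← h0]
        simp
      rw [hQu, hcc0, ← h0]
      norm_num
    · rcases eq_or_lt_of_le hω.2 with h1 | h1
      · -- ω = 1
        have hcc0 : cc = 0 := by
          rw [hcc, hu2, h1]
          simp
        rw [hQu, hcc0, h1]
        norm_num
      · have hσ1 := s1_nonneg P₁ P₂ S hP₁ x ω
        have hσ2 := s2_nonneg P₁ P₂ S hP₂ x ω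
        have hpos : 0 < ω * (1 - ω) := mul_pos h0 (sub_pos.mpr h1)
        -- PSD inequality with the skewed vector
        have hpsd : 0 ≤ (1-ω)^2*(ω^2*σ1) - 2*(ω*(1-ω))*cc + ω^2*((1-ω)^2*σ2) := by
          have h5 := psd_quad hQpsd (Sum.elim ((1-ω) • (u ∘ Sum.inl)) (-(ω • (u ∘ Sum.inr))))
          rw [quad_blocks Q hQt, hQ11, hQ22] at h5
          have ea : ((1-ω) • (u ∘ Sum.inl)) ⬝ᵥ (P₁ *ᵥ ((1-ω) • (u ∘ Sum.inl)))
              = (1-ω)^2*(ω^2*σ1) := by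
            rw [smul_dotProduct, Matrix.mulVec_smul, dotProduct_smul, smul_eq_mul,
              smul_eq_mul, hα]
            ring
          have eb : (-(ω • (u ∘ Sum.inr))) ⬝ᵥ (P₂ *ᵥ (-(ω • (u ∘ Sum.inr))))
              = ω^2*((1-ω)^2*σ2) := by
            rw [Matrix.mulVec_neg, neg_dotProduct, dotProduct_neg, neg_neg,
              smul_dotProduct, Matrix.mulVec_smul, dotProduct_smul, smul_eq_mul,
              smul_eq_mul, hβ]
            ring
          have ec : ((1-ω) • (u ∘ Sum.inl)) ⬝ᵥ (Q.toBlocks₁₂ *ᵥ (-(ω • (u ∘ Sum.inr))))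
              = -((ω*(1-ω))*cc) := by
            rw [Matrix.mulVec_neg, dotProduct_neg, smul_dotProduct, Matrix.mulVec_smul,
              dotProduct_smul, smul_eq_mul, smul_eq_mul, hcc]
            ring
          rw [ea, eb, ec] at h5
          linarith
        have key : ω*(1-ω)*(2*cc) ≤ ω*(1-ω)*(ω*(1-ω)*(σ1+σ2)) := by nlinarith [hpsd]
        have h2cc : 2*cc ≤ ω*(1-ω)*(σ1+σ2) := (mul_le_mul_iff_right₀ hpos).mp key
        rw [hQu]
        nlinarith [h2cc]
  -- main inequality chain
  rw [conj_dot]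
  set z := (Q + S)⁻¹ *ᵥ v with hz
  set w := u - z with hwdef
  have hPz : (Q + S) *ᵥ z = v := by
    rw [hz, Matrix.mulVec_mulVec, Matrix.mul_nonsing_inv _ hPdet, Matrix.one_mulVec]
  have hwPw : w ⬝ᵥ ((Q + S) *ᵥ w)
      = u ⬝ᵥ ((Q + S) *ᵥ u) - 2*(u ⬝ᵥ v) + v ⬝ᵥ ((Q + S)⁻¹ *ᵥ v) := by
    rw [hwdef, Matrix.mulVec_sub, hPz, dotProduct_sub, sub_dotProduct, sub_dotProduct]
    have e1 : z ⬝ᵥ ((Q + S) *ᵥ u) = u ⬝ᵥ v := by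
      rw [dot_mulVec_symm hPt, hPz, dotProduct_comm]
    have e2 : z ⬝ᵥ v = v ⬝ᵥ ((Q + S)⁻¹ *ᵥ v) := by
      rw [hz, dotProduct_comm]
    rw [e1, e2]
    ring
  have hPu : u ⬝ᵥ ((Q + S) *ᵥ u) = u ⬝ᵥ (Q *ᵥ u) + u ⬝ᵥ (S *ᵥ u) := by
    rw [Matrix.add_mulVec, dotProduct_add]
  have husv : u ⬝ᵥ v - u ⬝ᵥ (S *ᵥ u) = u ⬝ᵥ r := by
    rw [hrdef, dotProduct_sub]
  have hwP0 : 0 ≤ w ⬝ᵥ ((Q + S) *ᵥ w) := psd_quad hPd.posSemidef w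
  have hhtil : htil P₁ P₂ S x ω = u ⬝ᵥ v := by
    rw [htil, ← hvdef, ← hu, dotProduct_comm]
  have hmain : v ⬝ᵥ ((Q + S)⁻¹ *ᵥ v) - u ⬝ᵥ v
      = w ⬝ᵥ ((Q + S) *ᵥ w) + (ω * σ1 + (1 - ω) * σ2 - u ⬝ᵥ (Q *ᵥ u)) := by
    rw [hwPw]
    linarith [hPu, husv, hur]
  constructor
  · rw [hhtil]
    linarith [hwP0, hQuB, hmain]
  · intro hEq
    rw [hhtil] at hEq
    have hw0 : w ⬝ᵥ ((Q + S) *ᵥ w) ≤ 0 := by linarith [hQuB, hmain, hEq]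
    have : w = 0 := pd_quad_zero hPd hw0
    have huz : u = z := by rwa [hwdef, sub_eq_zero] at this
    show (Q + S) *ᵥ u = v
    rw [huz]
    exact hPz

lemma vmv_mulVec (a b c : Fin d → ℝ) : Matrix.vecMulVec a b *ᵥ c = (b ⬝ᵥ c) • a := by
  ext i
  simp only [Matrix.mulVec, Matrix.vecMulVec_apply, dotProduct, Pi.smul_apply, smul_eq_mul,
    Finset.sum_mul]
  exact Finset.sum_congr rfl fun j _ => by ring

lemma attain (hP₁ : P₁.PosDef) (hP₂ : P₂.PosDef) (hS : S.PosDef) (x : Fin d → ℝ)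
    (hx : x ≠ 0) {ω : ℝ} (hω : ω ∈ Set.Icc (0:ℝ) 1)
    (hstat : s1 P₁ P₂ S x ω = s2 P₁ P₂ S x ω) :
    ∃ P ∈ Adm d P₁ P₂ S, P.PosDef
      ∧ P *ᵥ (Fm P₁ P₂ S ω *ᵥ Sum.elim x x) = Sum.elim x x
      ∧ x ⬝ᵥ ((Hmat d)ᵀ * P⁻¹ * Hmat d) *ᵥ x = htil P₁ P₂ S x ω := by
  have h1t : P₁ᵀ = P₁ := herm_transpose hP₁.1
  have h2t : P₂ᵀ = P₂ := herm_transpose hP₂.1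
  have h₁ : IsUnit P₁.det := hP₁.det_pos.ne'.isUnit
  have h₂ : IsUnit P₂.det := hP₂.det_pos.ne'.isUnit
  set v : (Fin d ⊕ Fin d) → ℝ := Sum.elim x x with hvdef
  set u := Fm P₁ P₂ S ω *ᵥ v with hu
  set r := rv P₁ P₂ S x ω with hr
  have hrdef : r = v - S *ᵥ u := rfl
  set γ := s1 P₁ P₂ S x ω with hγ
  have hs2 : s2 P₁ P₂ S x ω = γ := hstat.symm
  obtain ⟨hu1, hu2⟩ := rel_blocks P₁ P₂ S hP₁ hP₂ hS x hω
  rw [← hu, ← hr] at hu1 hu2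
  -- γ > 0
  have hγpos : 0 < γ := by
    rcases lt_or_eq_of_le (s1_nonneg P₁ P₂ S hP₁ x ω) with h | h
    · exact h
    · exfalso
      have hle1 : s1 P₁ P₂ S x ω ≤ 0 := le_of_eq h.symm
      have hle2 : s2 P₁ P₂ S x ω ≤ 0 := by rw [hs2]; exact le_of_eq h.symm
      have hr1 : r ∘ Sum.inl = 0 := pd_quad_zero hP₁.inv hle1
      have hr2 : r ∘ Sum.inr = 0 := pd_quad_zero hP₂.inv hle2
      apply rv_ne_zero P₁ P₂ S hP₁ hP₂ hS x hx hω
      rw [← hr]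
      ext (i | i)
      · exact congrFun hr1 i
      · exact congrFun hr2 i
  set C := γ⁻¹ • Matrix.vecMulVec (r ∘ Sum.inl) (r ∘ Sum.inr) with hC
  set Ct := γ⁻¹ • Matrix.vecMulVec (r ∘ Sum.inr) (r ∘ Sum.inl) with hCt
  have hCtr : Cᵀ = Ct := by
    rw [hC, hCt, Matrix.transpose_smul]
    congr 1
    ext i j
    simp [Matrix.vecMulVec_apply, mul_comm]
  have hCttr : Ctᵀ = C := by
    rw [hC, hCt, Matrix.transpose_smul]
    congr 1
    ext i j
    simp [Matrix.vecMulVec_apply, mul_comm]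
  set Q := Matrix.fromBlocks P₁ C Ct P₂ with hQ
  have hQt : Qᵀ = Q := by
    rw [hQ, Matrix.fromBlocks_transpose, h1t, h2t, hCtr, hCttr]
  have hCS1 : ∀ y : Fin d → ℝ, (r ∘ Sum.inl ⬝ᵥ y)^2 ≤ γ * (y ⬝ᵥ (P₁ *ᵥ y)) := by
    intro y
    have := cs_psd hP₁.posSemidef h1t (P₁⁻¹ *ᵥ (r ∘ Sum.inl)) y
    have e1 : (P₁⁻¹ *ᵥ (r ∘ Sum.inl)) ⬝ᵥ (P₁ *ᵥ y) = r ∘ Sum.inl ⬝ᵥ y := by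
      rw [dot_mulVec_symm h1t, Matrix.mulVec_mulVec,
        Matrix.mul_nonsing_inv _ h₁, Matrix.one_mulVec]
    have e2 : (P₁⁻¹ *ᵥ (r ∘ Sum.inl)) ⬝ᵥ (P₁ *ᵥ (P₁⁻¹ *ᵥ (r ∘ Sum.inl))) = γ := by
      rw [Matrix.mulVec_mulVec, Matrix.mul_nonsing_inv _ h₁, Matrix.one_mulVec]
      exact dotProduct_comm _ _
    rwa [e1, e2] at this
  have hCS2 : ∀ y : Fin d → ℝ, (r ∘ Sum.inr ⬝ᵥ y)^2 ≤ γ * (y ⬝ᵥ (P₂ *ᵥ y)) := by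
    intro y
    have := cs_psd hP₂.posSemidef h2t (P₂⁻¹ *ᵥ (r ∘ Sum.inr)) y
    have e1 : (P₂⁻¹ *ᵥ (r ∘ Sum.inr)) ⬝ᵥ (P₂ *ᵥ y) = r ∘ Sum.inr ⬝ᵥ y := by
      rw [dot_mulVec_symm h2t, Matrix.mulVec_mulVec,
        Matrix.mul_nonsing_inv _ h₂, Matrix.one_mulVec]
    have e2 : (P₂⁻¹ *ᵥ (r ∘ Sum.inr)) ⬝ᵥ (P₂ *ᵥ (P₂⁻¹ *ᵥ (r ∘ Sum.inr))) = γ := by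
      rw [Matrix.mulVec_mulVec, Matrix.mul_nonsing_inv _ h₂, Matrix.one_mulVec]
      rw [← hs2]
      exact dotProduct_comm _ _
    rwa [e1, e2] at this
  have hQpsd : Q.PosSemidef := by
    refine Matrix.PosSemidef.of_dotProduct_mulVec_nonneg (isHerm_of_transpose hQt) fun y => ?_
    have hsty : star y = y := funext fun i => rfl
    rw [hsty]
    conv_rhs => rw [← Sum.elim_comp_inl_inr y]
    rw [quad_blocks Q hQt]
    rw [show Q.toBlocks₁₁ = P₁ from Matrix.toBlocks_fromBlocks₁₁ .., 
      show Q.toBlocks₁₂ = C from Matrix.toBlocks_fromBlocks₁₂ ..,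
      show Q.toBlocks₂₂ = P₂ from Matrix.toBlocks_fromBlocks₂₂ ..]
    set y₁ := y ∘ Sum.inl
    set y₂ := y ∘ Sum.inr
    have hcross : y₁ ⬝ᵥ (C *ᵥ y₂) = γ⁻¹ * ((r ∘ Sum.inr ⬝ᵥ y₂) * (r ∘ Sum.inl ⬝ᵥ y₁)) := by
      rw [hC, Matrix.smul_mulVec, vmv_mulVec, dotProduct_smul, smul_eq_mul,
        dotProduct_smul, smul_eq_mul, dotProduct_comm y₁]
    rw [hcross]
    set p := y₁ ⬝ᵥ (P₁ *ᵥ y₁)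
    set q := y₂ ⬝ᵥ (P₂ *ᵥ y₂)
    set a := r ∘ Sum.inl ⬝ᵥ y₁
    set b := r ∘ Sum.inr ⬝ᵥ y₂
    have ha2 : a^2 ≤ γ * p := hCS1 y₁
    have hb2 : b^2 ≤ γ * q := hCS2 y₂
    have hXeq : γ * (p + 2*(γ⁻¹*(b*a)) + q) = γ*p + 2*(a*b) + γ*q := by
      field_simp
    have h6 : 0 ≤ γ*p + 2*(a*b) + γ*q := by nlinarith [sq_nonneg (a+b)]
    have := (mul_nonneg_iff_of_pos_left hγpos).mp (by rw [hXeq]; exact h6)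
    linarith [this]
  -- Q *ᵥ u = r
  have hQu : Q *ᵥ u = r := by
    rw [hQ, mulVec_blocks]
    have hr2u : r ∘ Sum.inr ⬝ᵥ (u ∘ Sum.inr) = (1 - ω) * γ := by
      rw [hu2, dotProduct_smul, smul_eq_mul, ← hs2, s2]
    have hr1u : r ∘ Sum.inl ⬝ᵥ (u ∘ Sum.inl) = ω * γ := by
      rw [hu1, dotProduct_smul, smul_eq_mul, hγ, s1]
    have hb1 : P₁ *ᵥ (u ∘ Sum.inl) + C *ᵥ (u ∘ Sum.inr) = r ∘ Sum.inl := by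
      rw [hu1, Matrix.mulVec_smul, Matrix.mulVec_mulVec, Matrix.mul_nonsing_inv _ h₁,
        Matrix.one_mulVec, hC, Matrix.smul_mulVec, vmv_mulVec, hr2u, smul_smul]
      rw [show γ⁻¹ * ((1 - ω) * γ) = 1 - ω by field_simp]
      rw [← add_smul]
      norm_num
    have hb2 : Ct *ᵥ (u ∘ Sum.inl) + P₂ *ᵥ (u ∘ Sum.inr) = r ∘ Sum.inr := by
      rw [hu2, Matrix.mulVec_smul, Matrix.mulVec_mulVec, Matrix.mul_nonsing_inv _ h₂,
        Matrix.one_mulVec, hCt, Matrix.smul_mulVec, vmv_mulVec, hr1u, smul_smul]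
      rw [show γ⁻¹ * (ω * γ) = ω by field_simp]
      rw [← add_smul]
      norm_num
    rw [hb1, hb2, Sum.elim_comp_inl_inr]
  have hPu : (Q + S) *ᵥ u = v := by
    rw [Matrix.add_mulVec, hQu, hrdef]
    abel
  have hPd : (Q + S).PosDef := Matrix.PosDef.posSemidef_add hQpsd hS
  have hPdet : IsUnit (Q + S).det := hPd.det_pos.ne'.isUnit
  refine ⟨Q + S, ⟨Q, hQpsd, Matrix.toBlocks_fromBlocks₁₁ .., Matrix.toBlocks_fromBlocks₂₂ .., rfl⟩,
    hPd, hPu, ?_⟩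
  rw [conj_dot]
  have hinv : (Q + S)⁻¹ *ᵥ v = u := by
    calc (Q + S)⁻¹ *ᵥ v = (Q + S)⁻¹ *ᵥ ((Q + S) *ᵥ u) := by rw [hPu]
      _ = u := by
        rw [Matrix.mulVec_mulVec, Matrix.nonsing_inv_mul _ hPdet, Matrix.one_mulVec]
  rw [show Sum.elim x x = v from rfl, hinv]
  rfl

end Main

end GfunAux

open GfunAux

/-- if the derivative of `h_x` within `[0,1]` vanishes at `ω₀`, then
`ω₀` is the unique such point, `g(x) = h_x(ω₀)`, and the infimum defining `g(x)`
is attained at some `P* ∈ 𝒜`. -/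
theorem gfun_eq_hfun_of_deriv_zero (d : ℕ) (hd : 1 ≤ d)
    (P₁ P₂ : Matrix (Fin d) (Fin d) ℝ) (hP₁ : P₁.PosDef) (hP₂ : P₂.PosDef)
    (S : Matrix (Fin d ⊕ Fin d) (Fin d ⊕ Fin d) ℝ) (hS : S.PosDef)
    (x : Fin d → ℝ) (hx : x ≠ 0) (ω₀ : ℝ) (hω₀ : ω₀ ∈ Set.Icc (0 : ℝ) 1)
    (hder : HasDerivWithinAt (hfun d P₁ P₂ S x) 0 (Set.Icc (0 : ℝ) 1) ω₀) :
    (∀ ω ∈ Set.Icc (0 : ℝ) 1,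
        HasDerivWithinAt (hfun d P₁ P₂ S x) 0 (Set.Icc (0 : ℝ) 1) ω → ω = ω₀) ∧
    gfun d P₁ P₂ S x = hfun d P₁ P₂ S x ω₀ ∧
    ∃ P ∈ Adm d P₁ P₂ S,
      x ⬝ᵥ ((Hmat d)ᵀ * P⁻¹ * Hmat d) *ᵥ x = hfun d P₁ P₂ S x ω₀ := by
  classical
  set v : (Fin d ⊕ Fin d) → ℝ := Sum.elim x x with hv
  have hstat₀ := stationary P₁ P₂ S hP₁ hP₂ hS x hω₀ hder
  obtain ⟨P₀, hP₀Adm, hP₀pd, hP₀u, hP₀val⟩ := attain P₁ P₂ S hP₁ hP₂ hS x hx hω₀ hstat₀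
  haveI : Nonempty (Adm d P₁ P₂ S) := ⟨⟨P₀, hP₀Adm⟩⟩
  -- the value of gfun
  have hbdd : BddBelow (Set.range fun P : (Adm d P₁ P₂ S) =>
      x ⬝ᵥ ((Hmat d)ᵀ * ((P : Matrix (Fin d ⊕ Fin d) (Fin d ⊕ Fin d) ℝ))⁻¹ * Hmat d) *ᵥ x) := by
    refine ⟨htil P₁ P₂ S x ω₀, ?_⟩
    rintro y ⟨P, rfl⟩
    exact (lower_bound P₁ P₂ S hP₁ hP₂ hS x hω₀ P.2).1
  have hgle : gfun d P₁ P₂ S x ≤ htil P₁ P₂ S x ω₀ := by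
    have := ciInf_le hbdd (⟨P₀, hP₀Adm⟩ : (Adm d P₁ P₂ S))
    rw [gfun]
    calc (⨅ P : (Adm d P₁ P₂ S), x ⬝ᵥ ((Hmat d)ᵀ *
          ((P : Matrix (Fin d ⊕ Fin d) (Fin d ⊕ Fin d) ℝ))⁻¹ * Hmat d) *ᵥ x)
        ≤ x ⬝ᵥ ((Hmat d)ᵀ * P₀⁻¹ * Hmat d) *ᵥ x := this
      _ = htil P₁ P₂ S x ω₀ := hP₀val
  have hgge : htil P₁ P₂ S x ω₀ ≤ gfun d P₁ P₂ S x :=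
    le_ciInf fun P => (lower_bound P₁ P₂ S hP₁ hP₂ hS x hω₀ P.2).1
  have hg : gfun d P₁ P₂ S x = htil P₁ P₂ S x ω₀ := le_antisymm hgle hgge
  -- uniqueness
  have huniq : ∀ ω ∈ Set.Icc (0 : ℝ) 1,
      HasDerivWithinAt (hfun d P₁ P₂ S x) 0 (Set.Icc (0 : ℝ) 1) ω → ω = ω₀ := by
    intro ω hω hder'
    by_contra hne'
    have hstatω := stationary P₁ P₂ S hP₁ hP₂ hS x hω hder'
    obtain ⟨Pω, hAdmω, hpdω, hpuω, hvalω⟩ := attain P₁ P₂ S hP₁ hP₂ hS x hx hω hstatω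
    have hgleω : gfun d P₁ P₂ S x ≤ htil P₁ P₂ S x ω := by
      have := ciInf_le hbdd (⟨Pω, hAdmω⟩ : (Adm d P₁ P₂ S))
      rw [gfun]
      calc (⨅ P : (Adm d P₁ P₂ S), x ⬝ᵥ ((Hmat d)ᵀ *
            ((P : Matrix (Fin d ⊕ Fin d) (Fin d ⊕ Fin d) ℝ))⁻¹ * Hmat d) *ᵥ x)
          ≤ x ⬝ᵥ ((Hmat d)ᵀ * Pω⁻¹ * Hmat d) *ᵥ x := this
        _ = htil P₁ P₂ S x ω := hvalω
    have hggeω : htil P₁ P₂ S x ω ≤ gfun d P₁ P₂ S x :=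
      le_ciInf fun P => (lower_bound P₁ P₂ S hP₁ hP₂ hS x hω P.2).1
    have hgω : gfun d P₁ P₂ S x = htil P₁ P₂ S x ω := le_antisymm hgleω hggeω
    have hP₀valω : x ⬝ᵥ ((Hmat d)ᵀ * P₀⁻¹ * Hmat d) *ᵥ x = htil P₁ P₂ S x ω := by
      rw [hP₀val, ← hg, hgω]
    have hP₀uω : P₀ *ᵥ (Fm P₁ P₂ S ω *ᵥ Sum.elim x x) = Sum.elim x x :=
      (lower_bound P₁ P₂ S hP₁ hP₂ hS x hω hP₀Adm).2 hP₀valω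
    have hP₀det : IsUnit P₀.det := hP₀pd.det_pos.ne'.isUnit
    have hueq : Fm P₁ P₂ S ω *ᵥ Sum.elim x x = Fm P₁ P₂ S ω₀ *ᵥ Sum.elim x x := by
      calc Fm P₁ P₂ S ω *ᵥ Sum.elim x x
          = P₀⁻¹ *ᵥ (P₀ *ᵥ (Fm P₁ P₂ S ω *ᵥ Sum.elim x x)) := by
            rw [Matrix.mulVec_mulVec, Matrix.nonsing_inv_mul _ hP₀det, Matrix.one_mulVec]
        _ = P₀⁻¹ *ᵥ (P₀ *ᵥ (Fm P₁ P₂ S ω₀ *ᵥ Sum.elim x x)) := by rw [hP₀uω, hP₀u]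
        _ = Fm P₁ P₂ S ω₀ *ᵥ Sum.elim x x := by
            rw [Matrix.mulVec_mulVec, Matrix.nonsing_inv_mul _ hP₀det, Matrix.one_mulVec]
    have hreq : rv P₁ P₂ S x ω = rv P₁ P₂ S x ω₀ := by
      rw [rv, rv, hueq]
    have hG := Gm_isUnit_det P₁ P₂ S hP₁ hP₂ hS hω
    have hG₀ := Gm_isUnit_det P₁ P₂ S hP₁ hP₂ hS hω₀
    have h1 := rel_DEr P₁ P₂ S ω hG (Sum.elim x x)
    have h2 := rel_DEr P₁ P₂ S ω₀ hG₀ (Sum.elim x x)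
    rw [show Sum.elim x x - S *ᵥ (Fm P₁ P₂ S ω *ᵥ Sum.elim x x) = rv P₁ P₂ S x ω
      from rfl] at h1
    rw [show Sum.elim x x - S *ᵥ (Fm P₁ P₂ S ω₀ *ᵥ Sum.elim x x) = rv P₁ P₂ S x ω₀
      from rfl] at h2
    have hEE : Em d ω *ᵥ rv P₁ P₂ S x ω = Em d ω₀ *ᵥ rv P₁ P₂ S x ω := by
      calc Em d ω *ᵥ rv P₁ P₂ S x ω
          = Dm P₁ P₂ *ᵥ (Fm P₁ P₂ S ω *ᵥ Sum.elim x x) := h1.symm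
        _ = Dm P₁ P₂ *ᵥ (Fm P₁ P₂ S ω₀ *ᵥ Sum.elim x x) := by rw [hueq]
        _ = Em d ω₀ *ᵥ rv P₁ P₂ S x ω₀ := h2
        _ = Em d ω₀ *ᵥ rv P₁ P₂ S x ω := by rw [hreq]
    set r := rv P₁ P₂ S x ω with hrset
    rw [Em_mulVec, Em_mulVec] at hEE
    have he1 : ω • (r ∘ Sum.inl) = ω₀ • (r ∘ Sum.inl) := by
      ext i; exact congrFun hEE (Sum.inl i)
    have he2 : (1 - ω) • (r ∘ Sum.inr) = (1 - ω₀) • (r ∘ Sum.inr) := by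
      ext i; exact congrFun hEE (Sum.inr i)
    have hr1 : r ∘ Sum.inl = 0 := by
      have : (ω - ω₀) • (r ∘ Sum.inl) = 0 := by
        rw [sub_smul, he1, sub_self]
      rcases smul_eq_zero.mp this with h | h
      · exact absurd (sub_eq_zero.mp h) hne'
      · exact h
    have hr2 : r ∘ Sum.inr = 0 := by
      have : (ω - ω₀) • (r ∘ Sum.inr) = 0 := by
        have : ((1 - ω₀) - (1 - ω)) • (r ∘ Sum.inr) = 0 := by
          rw [sub_smul, he2, sub_self]
        convert this using 2
        ring
      rcases smul_eq_zero.mp this with h | h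
      · exact absurd (sub_eq_zero.mp h) hne'
      · exact h
    apply rv_ne_zero P₁ P₂ S hP₁ hP₂ hS x hx hω
    rw [← hrset]
    ext (i | i)
    · exact congrFun hr1 i
    · exact congrFun hr2 i
  refine ⟨huniq, ?_, ⟨P₀, hP₀Adm, ?_⟩⟩
  · rw [hfun_eq_htil P₁ P₂ S hP₁ hP₂ hS x hω₀]
    exact hg
  · rw [hfun_eq_htil P₁ P₂ S hP₁ hP₂ hS x hω₀]
    exact hP₀val
end
end
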